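/- arXiv:2207.04662 — 3 statements merged into one kernel-verified Lean document; each statement's English description precedes it below -/
import Mathlib

section
/- Let z₀ ∈ ℂ with |z₀| > 1 and let μ_P be the harmonic measure on 𝕋 at 1/\bar{z₀}. Then for every n ≥ 0, the Bergman function satisfies B_n(μ_P, z₀) = |z₀|^{2n} and hence λ_n(μ_P, z₀) = |z₀|^{−2n}. -/
open MeasureTheory Filter Real

/-- The Christoffel function. -/
noncomputable def christoffel (μ : Measure ℂ) (n : ℕ) (z : ℂ) : ℝ :=
  sInf {r : ℝ | ∃ p : Polynomial ℂ, p.natDegree ≤ n ∧ p.eval z = 1 ∧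
    r = ∫ w, (‖p.eval w‖) ^ 2 ∂μ}

/-- The harmonic measure of the unit disk at the point `1/z̄₀`, as a measure on the
unit circle: the image of the Poisson-density measure on `(-π,π]` under `t ↦ e^{it}`. -/
noncomputable def muP (z₀ : ℂ) : Measure ℂ :=
  Measure.map (fun t : ℝ => Complex.exp (t * Complex.I))
    ((volume.restrict (Set.Ioc (-π) π)).withDensity (fun t =>
      ENNReal.ofReal ((1 / (2 * π)) * (1 - ((‖z₀‖)⁻¹) ^ 2)
        / (‖Complex.exp (t * Complex.I) - ((starRingEnd ℂ) z₀)⁻¹‖) ^ 2)))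

section Aux
open intervalIntegral Complex
open scoped NNReal ENNReal


noncomputable abbrev ee (t : ℝ) : ℂ := Complex.exp (t * Complex.I)

lemma ee_ne (t : ℝ) : ee t ≠ 0 := Complex.exp_ne_zero _

lemma abs_ee (t : ℝ) : ‖ee t‖ = 1 := Complex.norm_exp_ofReal_mul_I t

lemma intZ0 : ∫ t in (-π)..π, (1:ℂ) = 2 * π := by
  simp [sub_neg_eq_add, two_mul]

lemma neg_one_zpow_inv (m : ℤ) : ((-1 : ℂ) ^ m)⁻¹ = (-1 : ℂ) ^ m := by
  rcases Int.even_or_odd m with h | h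
  · rw [h.neg_one_zpow]; exact inv_one
  · rw [h.neg_one_zpow]; exact inv_neg_one

lemma intZ (k : ℕ) (hk : k ≠ 0) : ∫ t in (-π)..π, (ee t) ^ k = 0 := by
  have h : ∀ t : ℝ, (ee t) ^ k = Complex.exp ((k * Complex.I) * t) := by
    intro t
    rw [← Complex.exp_nat_mul]
    ring_nf
  simp_rw [h]
  rw [integral_exp_mul_complex (by simp [Complex.I_ne_zero, hk])]
  have h1 : (k : ℂ) * Complex.I * π = ((k : ℤ) : ℂ) * (π * Complex.I) := by push_cast; ring
  have h2 : (k : ℂ) * Complex.I * ((-π : ℝ) : ℂ) = ((-(k : ℕ) : ℤ) : ℂ) * (π * Complex.I) := by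
    push_cast; ring
  rw [h1, h2, Complex.exp_int_mul, Complex.exp_int_mul, Complex.exp_pi_mul_I]
  rw [zpow_neg, neg_one_zpow_inv]
  simp

lemma onesub_ne {b u : ℂ} (hb : ‖b‖ < 1) (hu : ‖u‖ = 1) :
    1 - b * u ≠ 0 := by
  intro h
  have : ‖b * u‖ = 1 := by
    have : b * u = 1 := by linear_combination -h
    simp [this]
  rw [norm_mul, hu, mul_one] at this
  exact absurd this (ne_of_lt hb)

lemma onesub_slit {b u : ℂ} (hb : ‖b‖ < 1) (hu : ‖u‖ = 1) :
    1 - b * u ∈ Complex.slitPlane := by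
  left
  have h1 : ‖b * u‖ < 1 := by rw [norm_mul, hu, mul_one]; exact hb
  have h2 : (b * u).re ≤ ‖b * u‖ := Complex.re_le_norm _
  simp only [Complex.sub_re, Complex.one_re]
  linarith

lemma abs_exp_eps (ε t : ℝ) : ‖Complex.exp (↑ε * ↑t * Complex.I)‖ = 1 := by
  have : (↑ε * ↑t : ℂ) = ((ε * t : ℝ) : ℂ) := by push_cast; ring
  rw [this]
  exact Complex.norm_exp_ofReal_mul_I _

lemma intOne {b : ℂ} (hb : ‖b‖ < 1) {ε : ℝ} (hε : ε = 1 ∨ ε = -1) :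
    ∫ t in (-π)..π, (1 - b * Complex.exp (↑ε * ↑t * Complex.I))⁻¹ = 2 * π := by
  have hε2 : (ε : ℂ) * ε = 1 := by rcases hε with h | h <;> simp [h]
  have hne : ∀ t : ℝ, 1 - b * Complex.exp (↑ε * ↑t * Complex.I) ≠ 0 :=
    fun t => onesub_ne hb (abs_exp_eps ε t)
  set F : ℝ → ℂ := fun t => ↑t + ↑ε * Complex.I *
      Complex.log (1 - b * Complex.exp (↑ε * ↑t * Complex.I)) with hF
  have hderiv : ∀ t : ℝ, HasDerivAt F ((1 - b * Complex.exp (↑ε * ↑t * Complex.I))⁻¹) t := by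
    intro t
    have h1 : HasDerivAt (fun z : ℂ => Complex.exp (↑ε * z * Complex.I))
        (↑ε * Complex.I * Complex.exp (↑ε * ↑t * Complex.I)) ↑t := by
      have := ((hasDerivAt_id (↑t : ℂ)).const_mul ((ε : ℂ) * Complex.I)).cexp
      simpa [mul_comm, mul_assoc, mul_left_comm] using this
    have hg : HasDerivAt (fun s : ℝ => (1 : ℂ) - b * Complex.exp (↑ε * ↑s * Complex.I))
        (-(b * (↑ε * Complex.I * Complex.exp (↑ε * ↑t * Complex.I)))) t := by
      exact ((h1.comp_ofReal).const_mul b).const_sub 1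
    have hlog := (hg.clog_real (onesub_slit hb (abs_exp_eps ε t)))
    have := (Complex.ofRealCLM.hasDerivAt (x := t)).add (hlog.const_mul ((ε : ℂ) * Complex.I))
    convert this using 1
    · rfl
    · funext s; simp [hF]
    have hD := hne t
    rw [show Complex.ofRealCLM (1:ℝ) = (1:ℂ) from by simp]
    have hnum : (↑ε:ℂ) * Complex.I *
        (-(b * (↑ε * Complex.I * Complex.exp (↑ε * ↑t * Complex.I))) /
          (1 - b * Complex.exp (↑ε * ↑t * Complex.I))) =
        b * Complex.exp (↑ε * ↑t * Complex.I) / (1 - b * Complex.exp (↑ε * ↑t * Complex.I)) := by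
      rw [← mul_div_assoc]
      congr 1
      linear_combination (-(Complex.I * Complex.I) * b * Complex.exp (↑ε * ↑t * Complex.I)) * hε2
        + (-(b * Complex.exp (↑ε * ↑t * Complex.I))) * Complex.I_mul_I
    rw [hnum]
    field_simp
    ring
  have hcont : Continuous fun t : ℝ => (1 - b * Complex.exp (↑ε * ↑t * Complex.I))⁻¹ := by
    apply Continuous.inv₀
    · fun_prop
    · exact hne
  rw [integral_eq_sub_of_hasDerivAt (fun t _ => hderiv t) (hcont.intervalIntegrable _ _)]
  have he : ∀ s : ℝ, s = π ∨ s = -π → Complex.exp (↑ε * ↑s * Complex.I) = -1 := by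
    intro s hs
    have : (↑ε * ↑s : ℂ) * Complex.I = ↑π * Complex.I ∨
        (↑ε * ↑s : ℂ) * Complex.I = -(↑π * Complex.I) := by
      rcases hε with h | h <;> rcases hs with h' | h' <;> subst h <;> subst h' <;>
        [left; right; right; left] <;> push_cast <;> ring
    rcases this with h | h <;> rw [h]
    · exact Complex.exp_pi_mul_I
    · rw [Complex.exp_neg, Complex.exp_pi_mul_I]; exact inv_neg_one
  rw [hF]
  simp only [he π (Or.inl rfl), he (-π) (Or.inr rfl)]
  push_cast
  ring

lemma sub_w_ne {w : ℂ} (hw : ‖w‖ < 1) (t : ℝ) : ee t - w ≠ 0 := by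
  intro h
  have : ee t = w := by linear_combination h
  rw [← this] at hw
  rw [abs_ee] at hw
  linarith

lemma cont_onesub {b : ℂ} (hb : ‖b‖ < 1) (ε : ℝ) :
    Continuous fun t : ℝ => (1 - b * Complex.exp (↑ε * ↑t * Complex.I))⁻¹ := by
  apply Continuous.inv₀
  · fun_prop
  · exact fun t => onesub_ne hb (abs_exp_eps ε t)

lemma intC {w : ℂ} (hw : ‖w‖ < 1) (hw0 : w ≠ 0) :
    ∫ t in (-π)..π, (ee t - w)⁻¹ = 0 := by
  have key : ∀ t : ℝ, (ee t - w)⁻¹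
      = w⁻¹ * (1 - w * Complex.exp (↑(-1:ℝ) * ↑t * Complex.I))⁻¹ - w⁻¹ := by
    intro t
    have h1 : ee t ≠ 0 := ee_ne t
    have h2 : ee t - w ≠ 0 := sub_w_ne hw t
    have h3 : 1 - w * Complex.exp (↑(-1:ℝ) * ↑t * Complex.I) ≠ 0 :=
      onesub_ne hw (abs_exp_eps _ t)
    have h4 : Complex.exp (↑(-1:ℝ) * ↑t * Complex.I) = (ee t)⁻¹ := by
      push_cast
      rw [← Complex.exp_neg]
      ring_nf
    rw [h4] at h3 ⊢
    field_simp
    ring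
  simp_rw [key]
  rw [intervalIntegral.integral_sub (((cont_onesub hw (-1)).intervalIntegrable _ _).const_mul _)
    (intervalIntegrable_const), intervalIntegral.integral_const_mul,
    intOne hw (Or.inr rfl), intervalIntegral.integral_const]
  rw [Complex.real_smul]
  push_cast
  ring

lemma M1zero {w : ℂ} (hw : ‖w‖ < 1) (hw0 : w ≠ 0) :
    ∫ t in (-π)..π, w * (ee t) ^ 0 / (ee t - w) = 0 := by
  simp_rw [pow_zero, mul_one, div_eq_mul_inv]
  rw [intervalIntegral.integral_const_mul, intC hw hw0, mul_zero]

lemma cont_M1 {w : ℂ} (hw : ‖w‖ < 1) (k : ℕ) :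
    Continuous fun t : ℝ => w * (ee t) ^ k / (ee t - w) := by
  apply Continuous.div
  · fun_prop
  · fun_prop
  · exact fun t => sub_w_ne hw t

lemma M1succ {w : ℂ} (hw : ‖w‖ < 1) (hw0 : w ≠ 0) (k : ℕ) :
    ∫ t in (-π)..π, w * (ee t) ^ (k + 1) / (ee t - w) = 2 * π * w ^ (k + 1) := by
  induction k with
  | zero =>
    have key : ∀ t : ℝ, w * (ee t) ^ 1 / (ee t - w)
        = w * (ee t) ^ 0 + w * (w * (ee t) ^ 0 / (ee t - w)) := by
      intro t
      have h2 : ee t - w ≠ 0 := sub_w_ne hw t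
      field_simp
      ring
    simp_rw [key]
    rw [intervalIntegral.integral_add (Continuous.intervalIntegrable (by fun_prop : Continuous fun t => w * ee t ^ 0) _ _)
      (((cont_M1 hw 0).intervalIntegrable _ _).const_mul _),
      intervalIntegral.integral_const_mul, intervalIntegral.integral_const_mul,
      M1zero hw hw0]
    simp_rw [pow_zero]
    rw [intZ0]
    ring
  | succ m ih =>
    have key : ∀ t : ℝ, w * (ee t) ^ (m + 2) / (ee t - w)
        = w * (ee t) ^ (m + 1) + w * (w * (ee t) ^ (m + 1) / (ee t - w)) := by
      intro t
      have h2 : ee t - w ≠ 0 := sub_w_ne hw t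
      field_simp
      ring
    simp_rw [key]
    rw [intervalIntegral.integral_add (Continuous.intervalIntegrable (by fun_prop : Continuous fun t => w * ee t ^ (m + 1)) _ _)
      (((cont_M1 hw (m+1)).intervalIntegrable _ _).const_mul _),
      intervalIntegral.integral_const_mul, intervalIntegral.integral_const_mul,
      ih, intZ (m+1) (Nat.succ_ne_zero m)]
    ring

lemma ee_eq_exp_one (t : ℝ) : Complex.exp (↑(1:ℝ) * ↑t * Complex.I) = ee t := by
  push_cast; ring_nf

lemma cont_M2 {a : ℂ} (ha : ‖a‖ < 1) (k : ℕ) :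
    Continuous fun t : ℝ => (ee t) ^ k / (1 - a * ee t) := by
  apply Continuous.div
  · fun_prop
  · fun_prop
  · intro t
    have := onesub_ne ha (abs_exp_eps 1 t)
    rwa [ee_eq_exp_one] at this

lemma M2zero {a : ℂ} (ha : ‖a‖ < 1) :
    ∫ t in (-π)..π, (ee t) ^ 0 / (1 - a * ee t) = (2 * (π:ℂ)) := by
  have : ∀ t : ℝ, (ee t) ^ 0 / (1 - a * ee t)
      = (1 - a * Complex.exp (↑(1:ℝ) * ↑t * Complex.I))⁻¹ := by
    intro t
    rw [ee_eq_exp_one, pow_zero, one_div]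
  simp_rw [this]
  exact intOne ha (Or.inl rfl)

lemma M2succ {a : ℂ} (ha : ‖a‖ < 1) (ha0 : a ≠ 0) (k : ℕ) :
    ∫ t in (-π)..π, (ee t) ^ (k + 1) / (1 - a * ee t) = 0 := by
  induction k with
  | zero =>
    have key : ∀ t : ℝ, (ee t) ^ 1 / (1 - a * ee t)
        = a⁻¹ * ((ee t) ^ 0 / (1 - a * ee t)) - a⁻¹ * (ee t) ^ 0 := by
      intro t
      have h3 : 1 - a * ee t ≠ 0 := by
        have := onesub_ne ha (abs_exp_eps 1 t); rwa [ee_eq_exp_one] at this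
      have h3' : 1 - ee t * a ≠ 0 := by rwa [mul_comm]
      field_simp
      ring
    simp_rw [key]
    rw [intervalIntegral.integral_sub (((cont_M2 ha 0).intervalIntegrable _ _).const_mul _)
      (Continuous.intervalIntegrable (by fun_prop : Continuous fun t => a⁻¹ * ee t ^ 0) _ _), intervalIntegral.integral_const_mul, intervalIntegral.integral_const_mul,
      M2zero ha]
    simp_rw [pow_zero]
    rw [intZ0]
    ring
  | succ m ih =>
    have key : ∀ t : ℝ, (ee t) ^ (m + 2) / (1 - a * ee t)
        = a⁻¹ * ((ee t) ^ (m + 1) / (1 - a * ee t)) - a⁻¹ * (ee t) ^ (m + 1) := by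
      intro t
      have h3 : 1 - a * ee t ≠ 0 := by
        have := onesub_ne ha (abs_exp_eps 1 t); rwa [ee_eq_exp_one] at this
      field_simp
      ring
    simp_rw [key]
    rw [intervalIntegral.integral_sub (((cont_M2 ha (m+1)).intervalIntegrable _ _).const_mul _)
      (Continuous.intervalIntegrable (by fun_prop : Continuous fun t => a⁻¹ * ee t ^ (m + 1)) _ _), intervalIntegral.integral_const_mul, intervalIntegral.integral_const_mul,
      ih, intZ (m+1) (Nat.succ_ne_zero m)]
    ring

noncomputable def rr (z₀ : ℂ) (t : ℝ) : ℝ :=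
  (1 / (2 * π)) * (1 - ((‖z₀‖)⁻¹) ^ 2)
    / (‖Complex.exp (t * Complex.I) - ((starRingEnd ℂ) z₀)⁻¹‖) ^ 2

lemma conj_ee (t : ℝ) : (starRingEnd ℂ) (ee t) = (ee t)⁻¹ := by
  rw [show ee t = Complex.exp (t * Complex.I) from rfl, ← Complex.exp_conj, ← Complex.exp_neg]
  congr 1
  simp [Complex.conj_I]

lemma habs0 {z₀ : ℂ} (hz : 1 < ‖z₀‖) : z₀ ≠ 0 := by
  intro h; rw [h] at hz; simp at hz; linarith

lemma ha_lt {z₀ : ℂ} (hz : 1 < ‖z₀‖) : ‖z₀⁻¹‖ < 1 := by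
  rw [norm_inv]
  exact inv_lt_one_of_one_lt₀ hz

lemma hw_lt {z₀ : ℂ} (hz : 1 < ‖z₀‖) : ‖((starRingEnd ℂ) z₀)⁻¹‖ < 1 := by
  rw [norm_inv, Complex.norm_conj]
  exact inv_lt_one_of_one_lt₀ hz

lemma hw_ne {z₀ : ℂ} (hz : 1 < ‖z₀‖) : ((starRingEnd ℂ) z₀)⁻¹ ≠ 0 := by
  simp [habs0 hz]

lemma conj_w (z₀ : ℂ) : (starRingEnd ℂ) ((starRingEnd ℂ) z₀)⁻¹ = z₀⁻¹ := by
  rw [map_inv₀, Complex.conj_conj]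

lemma rr_key {z₀ : ℂ} (hz : 1 < ‖z₀‖) (k : ℕ) (t : ℝ) :
    (ee t) ^ k * ((rr z₀ t : ℝ) : ℂ)
    = (1 / (2 * (π:ℂ))) * (((starRingEnd ℂ) z₀)⁻¹ * (ee t) ^ k / (ee t - ((starRingEnd ℂ) z₀)⁻¹)
        + (ee t) ^ k / (1 - z₀⁻¹ * ee t)) := by
  set w : ℂ := ((starRingEnd ℂ) z₀)⁻¹ with hw_def
  set a : ℂ := z₀⁻¹ with ha_def
  have hz0 : z₀ ≠ 0 := habs0 hz
  have h1 : ee t ≠ 0 := ee_ne t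
  have h2 : ee t - w ≠ 0 := sub_w_ne (hw_lt hz) t
  have h3 : 1 - a * ee t ≠ 0 := by
    have := onesub_ne (ha_lt hz) (abs_exp_eps 1 t); rwa [ee_eq_exp_one] at this
  have habs : ((‖ee t - w‖ : ℝ) : ℂ) ^ 2 = (ee t - w) * ((ee t)⁻¹ - a) := by
    rw [← Complex.ofReal_pow, Complex.sq_norm, Complex.normSq_eq_conj_mul_self]
    rw [map_sub, conj_ee, conj_w]
    ring
  have habs2 : ((‖z₀‖ : ℝ) : ℂ) ^ 2 = z₀ * (starRingEnd ℂ) z₀ := by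
    rw [← Complex.ofReal_pow, Complex.sq_norm, Complex.normSq_eq_conj_mul_self]
    ring
  have hterm : ((‖z₀‖ : ℝ) : ℂ)⁻¹ ^ 2 = a * w := by
    rw [inv_pow, habs2, ha_def, hw_def, mul_inv]
  have hrr : ((rr z₀ t : ℝ) : ℂ)
      = (1 / (2 * (π:ℂ))) * (1 - a * w) / ((ee t - w) * ((ee t)⁻¹ - a)) := by
    unfold rr
    push_cast
    rw [show Complex.exp (↑t * Complex.I) = ee t from rfl, habs, hterm]
  rw [hrr]
  have h4 : (ee t)⁻¹ - a = (ee t)⁻¹ * (1 - a * ee t) := by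
    field_simp
  rw [h4]
  have hπ : (π : ℂ) ≠ 0 := Complex.ofReal_ne_zero.mpr Real.pi_ne_zero
  field_simp
  ring

lemma moment {z₀ : ℂ} (hz : 1 < ‖z₀‖) (k : ℕ) :
    ∫ t in (-π)..π, (ee t) ^ k * ((rr z₀ t : ℝ) : ℂ) = (((starRingEnd ℂ) z₀)⁻¹) ^ k := by
  simp_rw [rr_key hz k]
  rw [intervalIntegral.integral_const_mul,
    intervalIntegral.integral_add ((cont_M1 (hw_lt hz) k).intervalIntegrable _ _)
      ((cont_M2 (ha_lt hz) k).intervalIntegrable _ _)]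
  have hπ : (π : ℂ) ≠ 0 := Complex.ofReal_ne_zero.mpr Real.pi_ne_zero
  cases k with
  | zero =>
    rw [M1zero (hw_lt hz) (hw_ne hz), M2zero (ha_lt hz)]
    field_simp
    ring
  | succ m =>
    rw [M1succ (hw_lt hz) (hw_ne hz) m, M2succ (ha_lt hz) (inv_ne_zero (habs0 hz)) m]
    field_simp
    ring

lemma rr_cont {z₀ : ℂ} (hz : 1 < ‖z₀‖) : Continuous (rr z₀) := by
  unfold rr
  apply Continuous.div
  · fun_prop
  · exact (continuous_norm.comp (by fun_prop)).pow 2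
  · intro t
    have h2 : Complex.exp (t * Complex.I) - ((starRingEnd ℂ) z₀)⁻¹ ≠ 0 := sub_w_ne (hw_lt hz) t
    exact pow_ne_zero _ (norm_ne_zero_iff.mpr h2)

lemma rr_nonneg {z₀ : ℂ} (hz : 1 < ‖z₀‖) (t : ℝ) : 0 ≤ rr z₀ t := by
  unfold rr
  have h1 : (‖z₀‖)⁻¹ ≤ 1 := le_of_lt (inv_lt_one_of_one_lt₀ hz)
  have h2 : (0:ℝ) ≤ (‖z₀‖)⁻¹ := by positivity
  have h3 : ((‖z₀‖)⁻¹) ^ 2 ≤ 1 := by nlinarith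
  have h4 : (0:ℝ) ≤ 1 / (2*π) := by positivity
  exact div_nonneg (mul_nonneg h4 (by linarith)) (sq_nonneg _)

lemma muP_integral {E : Type*} [NormedAddCommGroup E] [NormedSpace ℝ E] {z₀ : ℂ}
    (hz : 1 < ‖z₀‖) (f : ℂ → E) (hf : Continuous f) :
    ∫ x, f x ∂(muP z₀) = ∫ t in Set.Ioc (-π) π, rr z₀ t • f (ee t) := by
  rw [muP]
  rw [MeasureTheory.integral_map (by fun_prop : Measurable fun t : ℝ =>
      Complex.exp (↑t * Complex.I)).aemeasurable hf.aestronglyMeasurable]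
  have hdens : (fun t : ℝ => ENNReal.ofReal ((1 / (2 * π)) * (1 - ((‖z₀‖)⁻¹) ^ 2)
        / (‖Complex.exp (t * Complex.I) - ((starRingEnd ℂ) z₀)⁻¹‖) ^ 2))
      = fun t : ℝ => ((Real.toNNReal (rr z₀ t) : ℝ≥0) : ℝ≥0∞) := by
    funext t
    rfl
  have hmeas : Measurable fun t : ℝ => (rr z₀ t).toNNReal :=
    (show Continuous fun t : ℝ => (rr z₀ t).toNNReal from
      continuous_real_toNNReal.comp (rr_cont hz)).measurable
  rw [hdens, integral_withDensity_eq_integral_smul hmeas]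
  congr 1
  funext t
  rw [NNReal.smul_def, Real.coe_toNNReal _ (rr_nonneg hz t)]

lemma rr_mass {z₀ : ℂ} (hz : 1 < ‖z₀‖) :
    ∫ t in Set.Ioc (-π) π, rr z₀ t = 1 := by
  have h0 := moment hz 0
  have hle : -π ≤ π := by linarith [Real.pi_pos]
  simp only [pow_zero, one_mul] at h0
  rw [intervalIntegral.integral_ofReal] at h0
  have h1 : ∫ t in (-π)..π, rr z₀ t = 1 := by exact_mod_cast h0
  rwa [intervalIntegral.integral_of_le hle] at h1

lemma momentIoc {z₀ : ℂ} (hz : 1 < ‖z₀‖) (k : ℕ) :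
    ∫ t in (-π)..π, (ee t) ^ k * ((rr z₀ t : ℝ) : ℂ) = (((starRingEnd ℂ) z₀)⁻¹) ^ k :=
  moment hz k

lemma Jlemma {z₀ : ℂ} (hz : 1 < ‖z₀‖) (n : ℕ) (p : Polynomial ℂ)
    (hdeg : p.natDegree ≤ n) :
    ∫ t in (-π)..π, (ee t) ^ n * (starRingEnd ℂ) (p.eval (ee t)) * ((rr z₀ t : ℝ) : ℂ)
      = (((starRingEnd ℂ) z₀)⁻¹) ^ n * (starRingEnd ℂ) (p.eval z₀) := by
  have hw0 : ((starRingEnd ℂ) z₀)⁻¹ ≠ 0 := hw_ne hz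
  have hlt : p.natDegree < n + 1 := Nat.lt_succ_of_le hdeg
  have key : ∀ t : ℝ, (ee t) ^ n * (starRingEnd ℂ) (p.eval (ee t)) * ((rr z₀ t : ℝ) : ℂ)
      = ∑ j ∈ Finset.range (n+1),
          (starRingEnd ℂ) (p.coeff j) * ((ee t) ^ (n-j) * ((rr z₀ t : ℝ) : ℂ)) := by
    intro t
    rw [Polynomial.eval_eq_sum_range' hlt, map_sum, Finset.mul_sum, Finset.sum_mul]
    apply Finset.sum_congr rfl
    intro j hj
    have hj' : j ≤ n := Nat.lt_succ_iff.mp (Finset.mem_range.mp hj)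
    rw [map_mul, map_pow, conj_ee, pow_sub₀ _ (ee_ne t) hj', inv_pow]
    ring
  simp_rw [key]
  rw [intervalIntegral.integral_finset_sum]
  · have hterm : ∀ j ∈ Finset.range (n+1),
        (∫ t in (-π)..π, (starRingEnd ℂ) (p.coeff j) * ((ee t) ^ (n-j) * ((rr z₀ t : ℝ) : ℂ)))
          = (starRingEnd ℂ) (p.coeff j) * (((starRingEnd ℂ) z₀)⁻¹) ^ (n-j) := by
      intro j _
      rw [intervalIntegral.integral_const_mul, momentIoc hz]
    rw [Finset.sum_congr rfl hterm]
    rw [Polynomial.eval_eq_sum_range' hlt z₀, map_sum, Finset.mul_sum]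
    apply Finset.sum_congr rfl
    intro j hj
    have hj' : j ≤ n := Nat.lt_succ_iff.mp (Finset.mem_range.mp hj)
    rw [map_mul, map_pow, pow_sub₀ _ hw0 hj']
    simp only [inv_pow, inv_inv]
    ring
  · intro j _
    apply Continuous.intervalIntegrable
    exact continuous_const.mul ((Continuous.pow (by fun_prop) (n-j)).mul
      (Complex.continuous_ofReal.comp (rr_cont hz)))

lemma rr_mass' {z₀ : ℂ} (hz : 1 < ‖z₀‖) : ∫ t in (-π)..π, rr z₀ t = 1 := by
  have hle : -π ≤ π := by linarith [Real.pi_pos]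
  rw [intervalIntegral.integral_of_le hle]
  exact rr_mass hz

lemma lower {z₀ : ℂ} (hz : 1 < ‖z₀‖) (n : ℕ) (p : Polynomial ℂ)
    (hdeg : p.natDegree ≤ n) (heval : p.eval z₀ = 1) :
    ((‖z₀‖)⁻¹) ^ (2*n) ≤ ∫ t in (-π)..π, rr z₀ t * (‖p.eval (ee t)‖)^2 := by
  have hle : -π ≤ π := by linarith [Real.pi_pos]
  set g : ℝ → ℝ := fun t => ‖p.eval (ee t)‖ with hg
  have hgc : Continuous g := continuous_norm.comp (by fun_prop)
  have hrc := rr_cont hz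
  set c : ℝ := ∫ t in (-π)..π, rr z₀ t * g t with hc
  have step2 : ((‖z₀‖)⁻¹) ^ n ≤ c := by
    have hJ := Jlemma hz n p hdeg
    rw [heval, map_one, mul_one] at hJ
    have h1 : ((‖z₀‖)⁻¹) ^ n = ‖(((starRingEnd ℂ) z₀)⁻¹) ^ n‖ := by
      rw [norm_pow, norm_inv, Complex.norm_conj]
    rw [h1, ← hJ]
    have h2 := intervalIntegral.norm_integral_le_integral_norm
      (f := fun t => (ee t) ^ n * (starRingEnd ℂ) (p.eval (ee t)) * ((rr z₀ t : ℝ) : ℂ))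
      (μ := volume) hle
    refine le_trans h2 (le_of_eq ?_)
    apply intervalIntegral.integral_congr
    intro t _
    simp only [norm_mul, norm_pow, abs_ee, Complex.norm_conj,
      Complex.norm_real, Real.norm_eq_abs, one_pow, one_mul]
    rw [_root_.abs_of_nonneg (rr_nonneg hz t)]
    ring
  have hint1 : IntervalIntegrable (fun t => rr z₀ t * g t ^ 2) volume (-π) π :=
    (hrc.mul (hgc.pow 2)).intervalIntegrable _ _
  have hint2 : IntervalIntegrable (fun t => rr z₀ t * g t) volume (-π) π :=
    (hrc.mul hgc).intervalIntegrable _ _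
  have hint3 : IntervalIntegrable (rr z₀) volume (-π) π := hrc.intervalIntegrable _ _
  have step3 : c ^ 2 ≤ ∫ t in (-π)..π, rr z₀ t * g t ^ 2 := by
    have hvar : 0 ≤ ∫ t in (-π)..π, rr z₀ t * (g t - c) ^ 2 :=
      intervalIntegral.integral_nonneg hle
        (fun u _ => mul_nonneg (rr_nonneg hz u) (sq_nonneg _))
    have hexp : ∀ t : ℝ, rr z₀ t * (g t - c) ^ 2
        = rr z₀ t * g t ^ 2 - 2 * c * (rr z₀ t * g t) + c ^ 2 * rr z₀ t := by
      intro t; ring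
    rw [intervalIntegral.integral_congr (fun t _ => hexp t)] at hvar
    rw [intervalIntegral.integral_add (IntervalIntegrable.sub hint1
        (hint2.const_mul _)) (hint3.const_mul _),
      intervalIntegral.integral_sub hint1 (hint2.const_mul _),
      intervalIntegral.integral_const_mul, intervalIntegral.integral_const_mul,
      rr_mass' hz, ← hc] at hvar
    nlinarith
  have h0 : (0:ℝ) ≤ ((‖z₀‖)⁻¹) ^ n := by positivity
  calc ((‖z₀‖)⁻¹) ^ (2*n) = (((‖z₀‖)⁻¹) ^ n) ^ 2 := by
        rw [← pow_mul, mul_comm]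
    _ ≤ c ^ 2 := by apply pow_le_pow_left₀ h0 step2
    _ ≤ _ := step3

end Aux

/-- For `|z₀| > 1` and the harmonic measure `μ_P` at `1/z̄₀`, the Christoffel function
satisfies `λ_n(μ_P, z₀) = |z₀|^{-2n}`, hence the Bergman function `B_n = λ_n⁻¹` equals
`|z₀|^{2n}`. -/
theorem stmt5 (z₀ : ℂ) (hz : 1 < ‖z₀‖) (n : ℕ) :
    christoffel (muP z₀) n z₀ = (‖z₀‖) ^ (-(2 * n : ℤ)) ∧
    (christoffel (muP z₀) n z₀)⁻¹ = (‖z₀‖) ^ (2 * n) := by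
  have hz0 : z₀ ≠ 0 := habs0 hz
  have hle : -π ≤ π := by linarith [Real.pi_pos]
  have hSint : ∀ p : Polynomial ℂ,
      (∫ x, (‖p.eval x‖) ^ 2 ∂(muP z₀))
        = ∫ t in (-π)..π, rr z₀ t * (‖p.eval (ee t)‖) ^ 2 := by
    intro p
    have hf : Continuous fun x : ℂ => (‖p.eval x‖) ^ 2 :=
      (continuous_norm.comp p.continuous).pow 2
    rw [muP_integral hz _ hf, intervalIntegral.integral_of_le hle]
    simp_rw [smul_eq_mul]
  set m : ℝ := ((‖z₀‖)⁻¹) ^ (2*n) with hm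
  have hmem : m ∈ {r : ℝ | ∃ p : Polynomial ℂ, p.natDegree ≤ n ∧ p.eval z₀ = 1 ∧
      r = ∫ w, (‖p.eval w‖) ^ 2 ∂(muP z₀)} := by
    refine ⟨(Polynomial.C z₀⁻¹ * Polynomial.X)^n, ?_, ?_, ?_⟩
    · rw [Polynomial.natDegree_pow, Polynomial.natDegree_C_mul (inv_ne_zero hz0),
        Polynomial.natDegree_X, mul_one]
    · rw [Polynomial.eval_pow, Polynomial.eval_mul, Polynomial.eval_C, Polynomial.eval_X,
        inv_mul_cancel₀ hz0, one_pow]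
    · rw [hSint]
      have hpt : ∀ t ∈ Set.uIcc (-π) π, rr z₀ t *
          (‖((Polynomial.C z₀⁻¹ * Polynomial.X)^n).eval (ee t)‖) ^ 2
            = m * rr z₀ t := by
        intro t _
        rw [Polynomial.eval_pow, Polynomial.eval_mul, Polynomial.eval_C, Polynomial.eval_X,
          norm_pow, norm_mul, norm_inv, abs_ee, mul_one, ← pow_mul, mul_comm n 2]
        ring
      rw [intervalIntegral.integral_congr hpt, intervalIntegral.integral_const_mul,
        rr_mass' hz, mul_one]
  have hlb : ∀ r ∈ {r : ℝ | ∃ p : Polynomial ℂ, p.natDegree ≤ n ∧ p.eval z₀ = 1 ∧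
      r = ∫ w, (‖p.eval w‖) ^ 2 ∂(muP z₀)}, m ≤ r := by
    rintro r ⟨p, hdeg, heval, rfl⟩
    rw [hSint p]
    exact lower hz n p hdeg heval
  have hsinf : christoffel (muP z₀) n z₀ = m := by
    unfold christoffel
    exact le_antisymm (csInf_le ⟨m, fun r hr => hlb r hr⟩ hmem)
      (le_csInf ⟨m, hmem⟩ hlb)
  constructor
  · rw [hsinf, hm, show (-(2 * n : ℤ)) = -((2*n : ℕ) : ℤ) by push_cast; ring,
      zpow_neg, zpow_natCast, ← inv_pow]
  · rw [hsinf, hm, ← inv_pow, inv_inv]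
end

section
/- Let K ⊂ ℂ be compact with infinitely many points, z₀ ∉ K, and n ∈ ℕ. Then there exists a unique polynomial p_n of degree at most n with ‖p_n‖_K = 1 and p_n(z₀) = M_n, where M_n := sup{ |p(z₀)| : p polynomial of degree ≤ n, ‖p‖_K ≤ 1 }. -/
open MeasureTheory Filter Real

/-- Sup norm of a polynomial on a set `K`. -/
noncomputable def supNorm (K : Set ℂ) (p : Polynomial ℂ) : ℝ :=
  sSup ((fun w => ‖p.eval w‖) '' K)

/-- `M_n(z₀,K)`: maximal modulus at `z₀` of polynomials of degree at most `n` bounded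
by `1` on `K`. -/
noncomputable def Mgrow (K : Set ℂ) (z₀ : ℂ) (n : ℕ) : ℝ :=
  sSup {r : ℝ | ∃ p : Polynomial ℂ, p.natDegree ≤ n ∧
    (∀ w ∈ K, ‖p.eval w‖ ≤ 1) ∧ r = ‖p.eval z₀‖}

namespace Stmt6Aux

open Polynomial

noncomputable def toPoly (n : ℕ) (c : Fin (n+1) → ℂ) : Polynomial ℂ :=
  ∑ i : Fin (n+1), C (c i) * X ^ (i : ℕ)

lemma toPoly_natDegree_le (n : ℕ) (c : Fin (n+1) → ℂ) : (toPoly n c).natDegree ≤ n := by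
  refine Polynomial.natDegree_sum_le_of_forall_le _ _ (fun i _ => ?_)
  calc (C (c i) * X ^ (i:ℕ)).natDegree ≤ (X ^ (i:ℕ) : Polynomial ℂ).natDegree :=
        natDegree_C_mul_le (c i) (X ^ (i:ℕ))
    _ ≤ n := by simpa using (by omega : (i:ℕ) ≤ n)

lemma toPoly_eval (n : ℕ) (c : Fin (n+1) → ℂ) (w : ℂ) :
    (toPoly n c).eval w = ∑ i : Fin (n+1), c i * w ^ (i:ℕ) := by
  simp [toPoly, eval_finset_sum]

lemma toPoly_coeff (n : ℕ) (p : Polynomial ℂ) (hp : p.natDegree ≤ n) :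
    toPoly n (fun i => p.coeff i) = p := by
  ext j
  rw [toPoly, finset_sum_coeff]
  simp only [coeff_C_mul, coeff_X_pow]
  by_cases hj : j ≤ n
  · rw [Finset.sum_eq_single (⟨j, by omega⟩ : Fin (n+1))]
    · simp
    · intro b _ hb
      have : j ≠ (b:ℕ) := fun h => hb (by ext; simp [h])
      simp [this]
    · simp
  · rw [Finset.sum_eq_zero, p.coeff_eq_zero_of_natDegree_lt (by omega)]
    intro b _
    have : j ≠ (b:ℕ) := by omega
    simp [this]

lemma toPoly_continuous (n : ℕ) (w : ℂ) :
    Continuous fun c : Fin (n+1) → ℂ => (toPoly n c).eval w := by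
  simp only [toPoly_eval]
  exact continuous_finset_sum _ fun i _ => (continuous_apply i).mul continuous_const

lemma mgrow_isGreatest (K : Set ℂ) (hK : IsCompact K) (hinf : K.Infinite) (z₀ : ℂ) (n : ℕ) :
    IsGreatest {r : ℝ | ∃ p : Polynomial ℂ, p.natDegree ≤ n ∧
      (∀ w ∈ K, ‖p.eval w‖ ≤ 1) ∧ r = ‖p.eval z₀‖} (Mgrow K z₀ n) := by
  classical
  set S : Set (Fin (n+1) → ℂ) :=
    {c | ∀ w ∈ K, ‖(toPoly n c).eval w‖ ≤ 1} with hS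
  -- distinct points in K
  set x : Fin (n+1) → ℂ := fun i => (((Set.Infinite.natEmbedding K hinf) (i : ℕ) : K) : ℂ) with hx
  have hxK : ∀ i, x i ∈ K := fun i => ((Set.Infinite.natEmbedding K hinf) (i : ℕ)).2
  have hxinj : Function.Injective x := by
    intro i j h
    have := (Set.Infinite.natEmbedding K hinf).injective (Subtype.ext h)
    exact Fin.ext (by simpa using this)
  set A : Matrix (Fin (n+1)) (Fin (n+1)) ℂ := Matrix.vandermonde x with hA
  have hdet : IsUnit A.det := by
    rw [hA, Matrix.det_vandermonde]
    refine (Finset.prod_ne_zero_iff.2 fun i _ => Finset.prod_ne_zero_iff.2 fun j hj => ?_).isUnit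
    have : i ≠ j := fun h => by subst h; simp at hj
    exact sub_ne_zero.2 fun h => this (hxinj h.symm)
  have hinv : ∀ c : Fin (n+1) → ℂ, (A⁻¹).mulVec (A.mulVec c) = c := by
    intro c
    rw [Matrix.mulVec_mulVec, Matrix.nonsing_inv_mul A hdet, Matrix.one_mulVec]
  -- S is compact
  have hmulvec_cont : Continuous fun v : Fin (n+1) → ℂ => (A⁻¹).mulVec v := by
    refine continuous_pi fun j => ?_
    simp only [Matrix.mulVec, dotProduct]
    exact continuous_finset_sum _ fun i _ => continuous_const.mul (continuous_apply i)
  set D : Set (Fin (n+1) → ℂ) := Set.univ.pi fun _ => Metric.closedBall (0:ℂ) 1 with hD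
  have hDcomp : IsCompact D := isCompact_univ_pi fun _ => isCompact_closedBall _ _
  have hSsub : S ⊆ (fun v => (A⁻¹).mulVec v) '' D := by
    intro c hc
    refine ⟨A.mulVec c, ?_, hinv c⟩
    intro j _
    simp only [Metric.mem_closedBall, dist_zero_right]
    have : A.mulVec c j = (toPoly n c).eval (x j) := by
      rw [toPoly_eval]
      simp [Matrix.mulVec, dotProduct, hA, Matrix.vandermonde, mul_comm]
    rw [this]
    exact hc _ (hxK j)
  have hSclosed : IsClosed S := by
    have : S = ⋂ w ∈ K, {c : Fin (n+1) → ℂ | ‖(toPoly n c).eval w‖ ≤ 1} := by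
      ext c; simp [hS, Set.mem_iInter]
    rw [this]
    exact isClosed_biInter fun w _ =>
      isClosed_le (continuous_norm.comp (toPoly_continuous n w)) continuous_const
  have hScomp : IsCompact S :=
    IsCompact.of_isClosed_subset (hDcomp.image hmulvec_cont) hSclosed hSsub
  have hS0 : (0 : Fin (n+1) → ℂ) ∈ S := by
    intro w _
    simp [toPoly_eval]
  -- maximizer
  set f : (Fin (n+1) → ℂ) → ℝ := fun c => ‖(toPoly n c).eval z₀‖ with hf
  obtain ⟨c₀, hc₀S, hc₀max⟩ := hScomp.exists_isMaxOn ⟨0, hS0⟩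
    ((continuous_norm.comp (toPoly_continuous n z₀)).continuousOn (s := S))
  have hset : {r : ℝ | ∃ p : Polynomial ℂ, p.natDegree ≤ n ∧
      (∀ w ∈ K, ‖p.eval w‖ ≤ 1) ∧ r = ‖p.eval z₀‖} = f '' S := by
    ext r
    constructor
    · rintro ⟨p, h1, h2, rfl⟩
      refine ⟨fun i => p.coeff i, ?_, ?_⟩
      · intro w hw; rw [toPoly_coeff n p h1]; exact h2 w hw
      · rw [hf]; simp only; rw [toPoly_coeff n p h1]
    · rintro ⟨c, hc, rfl⟩
      exact ⟨toPoly n c, toPoly_natDegree_le n c, hc, rfl⟩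
  have hgreat : IsGreatest (f '' S) (f c₀) :=
    ⟨⟨c₀, hc₀S, rfl⟩, by rintro r ⟨c, hc, rfl⟩; exact hc₀max hc⟩
  rw [Mgrow, hset, hgreat.csSup_eq]
  exact hgreat

lemma mgrow_ge_one (K : Set ℂ) (hK : IsCompact K) (hinf : K.Infinite) (z₀ : ℂ) (n : ℕ) :
    1 ≤ Mgrow K z₀ n :=
  (mgrow_isGreatest K hK hinf z₀ n).2 ⟨1, by simp, by simp, by simp⟩

lemma key_bound (K : Set ℂ) (hK : IsCompact K) (hinf : K.Infinite) (z₀ : ℂ) (n : ℕ)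
    (q : Polynomial ℂ) (hq : q.natDegree ≤ n) (a : ℝ)
    (hqa : ∀ w ∈ K, ‖q.eval w‖ ≤ a)
    (hqz : Mgrow K z₀ n ≤ ‖q.eval z₀‖) : 1 ≤ a := by
  by_contra h
  push_neg at h
  have hM := mgrow_isGreatest K hK hinf z₀ n
  have hM1 := mgrow_ge_one K hK hinf z₀ n
  obtain ⟨w₀, hw₀⟩ := hinf.nonempty
  have ha0 : 0 ≤ a := le_trans (norm_nonneg _) (hqa w₀ hw₀)
  rcases eq_or_lt_of_le ha0 with ha | ha
  · -- a = 0 : q vanishes on K, so q = 0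
    have hq0 : q = 0 := by
      refine Polynomial.eq_zero_of_infinite_isRoot q (Set.Infinite.mono ?_ hinf)
      intro w hw
      have := hqa w hw
      rw [← ha] at this
      simpa [Polynomial.IsRoot] using le_antisymm this (norm_nonneg _)
    rw [hq0] at hqz
    simp at hqz
    linarith
  · -- 0 < a < 1 : rescale
    set q' : Polynomial ℂ := C ((a⁻¹ : ℝ) : ℂ) * q with hq'
    have habs : ∀ z : ℂ, ‖q'.eval z‖ = a⁻¹ * ‖q.eval z‖ := by
      intro z
      simp only [hq', eval_mul, eval_C, norm_mul, Complex.norm_real, Real.norm_eq_abs,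
        abs_of_nonneg (inv_nonneg.2 ha0)]
    have hmem : a⁻¹ * ‖q.eval z₀‖ ∈ {r : ℝ | ∃ p : Polynomial ℂ, p.natDegree ≤ n ∧
        (∀ w ∈ K, ‖p.eval w‖ ≤ 1) ∧ r = ‖p.eval z₀‖} := by
      refine ⟨q', le_trans (natDegree_C_mul_le _ _) hq, fun w hw => ?_, (habs z₀).symm⟩
      rw [habs]
      calc a⁻¹ * ‖q.eval w‖ ≤ a⁻¹ * a :=
            mul_le_mul_of_nonneg_left (hqa w hw) (inv_nonneg.2 ha0)
        _ = 1 := inv_mul_cancel₀ (ne_of_gt ha)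
    have hle := hM.2 hmem
    have : Mgrow K z₀ n < a⁻¹ * ‖q.eval z₀‖ := by
      calc Mgrow K z₀ n = 1 * Mgrow K z₀ n := (one_mul _).symm
        _ < a⁻¹ * Mgrow K z₀ n := by
            exact mul_lt_mul_of_pos_right (one_lt_inv₀ ha |>.2 h) (by linarith)
        _ ≤ a⁻¹ * ‖q.eval z₀‖ :=
            mul_le_mul_of_nonneg_left hqz (inv_nonneg.2 ha0)
    linarith

lemma supNorm_bound (K : Set ℂ) (hK : IsCompact K) (p : Polynomial ℂ)
    (hsn : supNorm K p = 1) : ∀ w ∈ K, ‖p.eval w‖ ≤ 1 := by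
  intro w hw
  have hbdd : BddAbove ((fun w => ‖p.eval w‖) '' K) :=
    (hK.image (continuous_norm.comp p.continuous)).bddAbove
  have := le_csSup hbdd (Set.mem_image_of_mem _ hw)
  rwa [← _root_.supNorm, hsn] at this

lemma supNorm_attained (K : Set ℂ) (hK : IsCompact K) (hne : K.Nonempty) (p : Polynomial ℂ) :
    ∃ w ∈ K, ‖p.eval w‖ = supNorm K p := by
  have hcomp : IsCompact ((fun w => ‖p.eval w‖) '' K) :=
    hK.image (continuous_norm.comp p.continuous)
  have := hcomp.sSup_mem (hne.image _)
  rw [← _root_.supNorm] at this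
  obtain ⟨w, hw, hw2⟩ := this
  exact ⟨w, hw, hw2⟩

lemma supNorm_le_of_forall (K : Set ℂ) (hne : K.Nonempty) (p : Polynomial ℂ) {a : ℝ}
    (h : ∀ w ∈ K, ‖p.eval w‖ ≤ a) : supNorm K p ≤ a :=
  csSup_le (hne.image _) (by rintro r ⟨w, hw, rfl⟩; exact h w hw)

lemma supNorm_eq_one_of (K : Set ℂ) (hK : IsCompact K) (hinf : K.Infinite) (z₀ : ℂ) (n : ℕ)
    (p : Polynomial ℂ) (h1 : p.natDegree ≤ n) (h2 : ∀ w ∈ K, ‖p.eval w‖ ≤ 1)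
    (h3 : Mgrow K z₀ n ≤ ‖p.eval z₀‖) : supNorm K p = 1 := by
  have hle := supNorm_le_of_forall K hinf.nonempty p h2
  have hub : ∀ w ∈ K, ‖p.eval w‖ ≤ supNorm K p := by
    intro w hw
    exact le_csSup (hK.image (continuous_norm.comp p.continuous)).bddAbove
      (Set.mem_image_of_mem _ hw)
  have := key_bound K hK hinf z₀ n p h1 (supNorm K p) hub h3
  linarith

lemma abs_add_eq_two (a b : ℂ) (ha : ‖a‖ ≤ 1) (hb : ‖b‖ ≤ 1)
    (hab : ‖a + b‖ = 2) : a = b := by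
  have hna : ‖a‖ ≤ 1 := ha
  have hnb : ‖b‖ ≤ 1 := hb
  have hnab : ‖a + b‖ = 2 := hab
  have htri : ‖a + b‖ ≤ ‖a‖ + ‖b‖ := norm_add_le a b
  have ha1 : ‖a‖ = 1 := by linarith
  have hb1 : ‖b‖ = 1 := by linarith
  have hray : SameRay ℝ a b := sameRay_iff_norm_add.2 (by rw [hnab, ha1, hb1]; norm_num)
  rcases hray with h0 | h0 | ⟨r, s, hr, hs, hrs⟩
  · rw [h0] at ha1; simp at ha1
  · rw [h0] at hb1; simp at hb1
  · have hnorm : r = s := by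
      have := congrArg (‖·‖) hrs
      simpa [norm_smul, ha1, hb1, abs_of_pos hr, abs_of_pos hs] using this
    rw [hnorm] at hrs
    exact smul_right_injective ℂ (ne_of_gt hs) hrs

lemma roots_ncard_le (d : Polynomial ℂ) (hd : d ≠ 0) :
    {z : ℂ | d.eval z = 0}.Finite ∧ {z : ℂ | d.eval z = 0}.ncard ≤ d.natDegree := by
  classical
  have hset : {z : ℂ | d.eval z = 0} = ↑d.roots.toFinset := by
    ext z; simp [Polynomial.mem_roots, hd, Polynomial.IsRoot]
  constructor
  · rw [hset]; exact (d.roots.toFinset).finite_toSet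
  · rw [hset, Set.ncard_coe_finset]
    exact le_trans (Multiset.toFinset_card_le _) (Polynomial.card_roots' d)

lemma exists_good (K : Set ℂ) (hK : IsCompact K) (hinf : K.Infinite) (z₀ : ℂ) (n : ℕ) :
    ∃ p : Polynomial ℂ, p.natDegree ≤ n ∧ supNorm K p = 1 ∧
      p.eval z₀ = ((Mgrow K z₀ n : ℝ) : ℂ) := by
  have hM := mgrow_isGreatest K hK hinf z₀ n
  have hM1 := mgrow_ge_one K hK hinf z₀ n
  set M := Mgrow K z₀ n with hMdef
  have hMabs : ‖((M : ℝ) : ℂ)‖ = M := by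
    rw [Complex.norm_real, Real.norm_eq_abs, abs_of_nonneg (by linarith)]
  obtain ⟨p₀, hp₀d, hp₀b, hp₀z⟩ := hM.1
  have hp₀z0 : p₀.eval z₀ ≠ 0 := by
    intro h; rw [h] at hp₀z; simp at hp₀z; linarith
  set u : ℂ := ((M:ℝ):ℂ) / p₀.eval z₀ with hu
  set P := C u * p₀ with hP
  have hPd : P.natDegree ≤ n := le_trans (natDegree_C_mul_le _ _) hp₀d
  have huabs : ‖u‖ = 1 := by
    rw [hu, norm_div, hMabs, ← hp₀z]
    exact div_self (by linarith)
  have hPb : ∀ w ∈ K, ‖P.eval w‖ ≤ 1 := by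
    intro w hw
    rw [hP, eval_mul, eval_C, norm_mul, huabs, one_mul]
    exact hp₀b w hw
  have hPz : P.eval z₀ = ((M:ℝ):ℂ) := by
    rw [hP, eval_mul, eval_C, hu, div_mul_cancel₀ _ hp₀z0]
  have hPsn : supNorm K P = 1 := by
    refine supNorm_eq_one_of K hK hinf z₀ n P hPd hPb ?_
    rw [hPz, hMabs]
  exact ⟨P, hPd, hPsn, hPz⟩

lemma uniq (K : Set ℂ) (hK : IsCompact K) (hinf : K.Infinite) (z₀ : ℂ) (hz₀ : z₀ ∉ K)
    (n : ℕ) (p₁ p₂ : Polynomial ℂ)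
    (H1 : p₁.natDegree ≤ n ∧ supNorm K p₁ = 1 ∧ p₁.eval z₀ = ((Mgrow K z₀ n : ℝ) : ℂ))
    (H2 : p₂.natDegree ≤ n ∧ supNorm K p₂ = 1 ∧ p₂.eval z₀ = ((Mgrow K z₀ n : ℝ) : ℂ)) :
    p₁ = p₂ := by
  classical
  obtain ⟨h1d, h1s, h1z⟩ := H1
  obtain ⟨h2d, h2s, h2z⟩ := H2
  by_contra hne
  have hM := mgrow_isGreatest K hK hinf z₀ n
  have hM1 := mgrow_ge_one K hK hinf z₀ n
  set M := Mgrow K z₀ n with hMdef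
  have hMabs : ‖((M : ℝ) : ℂ)‖ = M := by
    rw [Complex.norm_real, Real.norm_eq_abs, abs_of_nonneg (by linarith)]
  have hb₁ := supNorm_bound K hK p₁ h1s
  have hb₂ := supNorm_bound K hK p₂ h2s
  set p := C (2⁻¹ : ℂ) * (p₁ + p₂) with hp
  have hpd : p.natDegree ≤ n :=
    le_trans (natDegree_C_mul_le _ _) (le_trans (natDegree_add_le _ _) (max_le h1d h2d))
  have hpevals : ∀ z, p.eval z = 2⁻¹ * (p₁.eval z + p₂.eval z) := by
    intro z; simp [hp]
  have habs2 : ‖(2⁻¹ : ℂ)‖ = 2⁻¹ := by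
    rw [show ((2:ℂ))⁻¹ = (((2⁻¹ : ℝ)):ℂ) by push_cast; ring, Complex.norm_real, Real.norm_eq_abs]
    norm_num
  have hpb : ∀ w ∈ K, ‖p.eval w‖ ≤ 1 := by
    intro w hw
    rw [hpevals, norm_mul, habs2]
    have := norm_add_le (p₁.eval w) (p₂.eval w)
    have h1 := hb₁ w hw
    have h2 := hb₂ w hw
    nlinarith [norm_nonneg (p₁.eval w + p₂.eval w)]
  have hpz : p.eval z₀ = ((M:ℝ):ℂ) := by
    rw [hpevals, h1z, h2z]; ring
  have hpsn : supNorm K p = 1 :=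
    supNorm_eq_one_of K hK hinf z₀ n p hpd hpb (by rw [hpz, hMabs])
  set E := {w : ℂ | w ∈ K ∧ ‖p.eval w‖ = 1} with hE
  have hEeq : ∀ w ∈ E, p₁.eval w = p₂.eval w := by
    rintro w ⟨hwK, hw1⟩
    refine abs_add_eq_two _ _ (hb₁ w hwK) (hb₂ w hwK) ?_
    rw [hpevals, norm_mul, habs2] at hw1
    linarith
  set d := p₁ - p₂ with hd
  have hd0 : d ≠ 0 := sub_ne_zero.2 hne
  obtain ⟨hrfin, hrcard⟩ := roots_ncard_le d hd0
  have hEsub : E ⊆ {z | d.eval z = 0} := by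
    intro w hw
    simp only [Set.mem_setOf_eq, hd, eval_sub, sub_eq_zero]
    exact hEeq w hw
  have hEfin : E.Finite := hrfin.subset hEsub
  have hdz0 : d.eval z₀ = 0 := by simp [hd, h1z, h2z]
  have hz0E : z₀ ∉ E := fun h => hz₀ h.1
  have hsub2 : insert z₀ E ⊆ {z | d.eval z = 0} := Set.insert_subset hdz0 hEsub
  have hcard : E.ncard + 1 ≤ n := by
    have hle := Set.ncard_le_ncard hsub2 hrfin
    rw [Set.ncard_insert_of_notMem hz0E hEfin] at hle
    have hdd : d.natDegree ≤ n := le_trans (natDegree_sub_le _ _) (max_le h1d h2d)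
    omega
  -- interpolation polynomial Q
  set Et := hEfin.toFinset with hEt
  set s : Finset ℂ := insert z₀ Et with hs
  have hsinj : Set.InjOn id (s : Set ℂ) := Function.injective_id.injOn
  set r : ℂ → ℂ := fun z => if z = z₀ then 0 else p.eval z with hr
  set Q := Lagrange.interpolate s id r with hQ
  have hz0Et : z₀ ∉ Et := by rw [hEt, Set.Finite.mem_toFinset]; exact hz0E
  have hscard : s.card ≤ n := by
    rw [hs, Finset.card_insert_of_notMem hz0Et]
    have : Et.card = E.ncard := by
      rw [hEt, Set.ncard_eq_toFinset_card E hEfin]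
    omega
  have hQz : Q.eval z₀ = 0 := by
    have := Lagrange.eval_interpolate_at_node r hsinj (Finset.mem_insert_self z₀ Et)
    simpa [hr, hQ] using this
  have hQE : ∀ w ∈ E, Q.eval w = p.eval w := by
    intro w hw
    have hwmem : w ∈ s := by
      rw [hs]
      exact Finset.mem_insert_of_mem (hEfin.mem_toFinset.2 hw)
    have heval := Lagrange.eval_interpolate_at_node r hsinj hwmem
    have hwne : w ≠ z₀ := fun h => hz₀ (h ▸ hw.1)
    simpa [hr, hwne, hQ] using heval
  have hQd : Q.natDegree ≤ n := by
    rcases eq_or_ne Q 0 with h | h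
    · simp [h]
    · have hdeg := Lagrange.degree_interpolate_lt r hsinj
      rw [← hQ] at hdeg
      have := (Polynomial.natDegree_lt_iff_degree_lt h).2 hdeg
      omega
  -- perturbation
  set U := {z : ℂ | ‖(p - Q).eval z‖ < 2⁻¹} with hU
  have hUopen : IsOpen U :=
    isOpen_lt (continuous_norm.comp (p - Q).continuous) continuous_const
  have hEU : E ⊆ U := by
    intro w hw
    simp only [hU, Set.mem_setOf_eq, eval_sub, hQE w hw, sub_self, norm_zero]
    norm_num
  set KU := K \ U with hKU
  have hKUc : IsCompact KU := hK.diff hUopen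
  set s' := supNorm KU p with hs'
  have hs'0 : 0 ≤ s' := by
    rcases KU.eq_empty_or_nonempty with h | h
    · rw [hs', _root_.supNorm, h]; simp [Real.sSup_empty]
    · obtain ⟨w, hw, hweq⟩ := supNorm_attained KU hKUc h p
      rw [hs', ← hweq]; exact norm_nonneg _
  have hs'lt : s' < 1 := by
    rcases KU.eq_empty_or_nonempty with h | h
    · rw [hs', _root_.supNorm, h]; simp [Real.sSup_empty]
    · obtain ⟨w, hw, hweq⟩ := supNorm_attained KU hKUc h p
      rw [hs', ← hweq]
      have hwK : w ∈ K := hw.1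
      have hwnE : w ∉ E := fun hE' => hw.2 (hEU hE')
      exact lt_of_le_of_ne (hpb w hwK) (fun h1 => hwnE ⟨hwK, h1⟩)
  have hub : ∀ w ∈ KU, ‖p.eval w‖ ≤ s' := by
    intro w hw
    exact le_csSup (hKUc.image (continuous_norm.comp p.continuous)).bddAbove
      (Set.mem_image_of_mem _ hw)
  set B := supNorm K Q + 1 with hB
  have hQsup : ∀ w ∈ K, ‖Q.eval w‖ ≤ supNorm K Q := by
    intro w hw
    exact le_csSup (hK.image (continuous_norm.comp Q.continuous)).bddAbove
      (Set.mem_image_of_mem _ hw)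
  have hQb : ∀ w ∈ K, ‖Q.eval w‖ ≤ B := by
    intro w hw; have := hQsup w hw; rw [hB]; linarith
  have hB0 : 0 < B := by
    obtain ⟨w₀, hw₀⟩ := hinf.nonempty
    have := le_trans (norm_nonneg (Q.eval w₀)) (hQsup w₀ hw₀)
    rw [hB]; linarith
  set t := min (2⁻¹ : ℝ) ((1 - s')/(2*B)) with ht
  have ht0 : 0 < t := lt_min (by norm_num) (div_pos (by linarith) (by linarith))
  have ht2 : t ≤ 2⁻¹ := min_le_left _ _
  have htB : t * B ≤ (1 - s')/2 := by
    have h1 : t ≤ (1 - s')/(2*B) := min_le_right _ _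
    calc t * B ≤ ((1 - s')/(2*B)) * B := mul_le_mul_of_nonneg_right h1 (le_of_lt hB0)
      _ = (1 - s')/2 := by field_simp
  set q := p - C ((t:ℝ):ℂ) * Q with hq
  have hqev : ∀ z, q.eval z = p.eval z - ((t:ℝ):ℂ) * Q.eval z := by
    intro z
    rw [hq, eval_sub,
      show (C ((t:ℝ):ℂ) * Q).eval z = ((t:ℝ):ℂ) * Q.eval z by rw [eval_mul, eval_C]]
  have htabs : ‖((t:ℝ):ℂ)‖ = t := by
    rw [Complex.norm_real, Real.norm_eq_abs, abs_of_pos ht0]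
  have hqd : q.natDegree ≤ n :=
    le_trans (natDegree_sub_le _ _)
      (max_le hpd (le_trans (natDegree_C_mul_le _ _) hQd))
  have hqzabs : ‖q.eval z₀‖ = M := by
    rw [hqev, hQz, mul_zero, sub_zero, hpz, hMabs]
  set a := max (1 - t/2) ((1 + s')/2) with ha
  have hqb : ∀ w ∈ K, ‖q.eval w‖ ≤ a := by
    intro w hw
    by_cases hwU : w ∈ U
    · have key : q.eval w = (1 - ((t:ℝ):ℂ)) * p.eval w + ((t:ℝ):ℂ) * (p.eval w - Q.eval w) := by
        rw [hqev]; ring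
      have habs1 : ‖((1:ℂ) - ((t:ℝ):ℂ))‖ = 1 - t := by
        rw [show (1:ℂ) - ((t:ℝ):ℂ) = (((1 - t : ℝ)):ℂ) by push_cast; ring,
          Complex.norm_real, Real.norm_eq_abs, abs_of_nonneg (by linarith)]
      have h2 : ‖p.eval w - Q.eval w‖ ≤ 2⁻¹ := by
        have := hwU
        rw [hU, Set.mem_setOf_eq, eval_sub] at this
        linarith
      calc ‖q.eval w‖
          ≤ ‖((1 - ((t:ℝ):ℂ)) * p.eval w)‖
            + ‖(((t:ℝ):ℂ) * (p.eval w - Q.eval w))‖ := by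
            rw [key]; exact norm_add_le _ _
        _ = (1 - t) * ‖p.eval w‖ + t * ‖p.eval w - Q.eval w‖ := by
            rw [norm_mul, norm_mul, habs1, htabs]
        _ ≤ (1 - t) * 1 + t * 2⁻¹ := by
            have h3 := hpb w hw
            have h4 : (0:ℝ) ≤ 1 - t := by linarith
            nlinarith
        _ = 1 - t/2 := by ring
        _ ≤ a := le_max_left _ _
    · have hwKU : w ∈ KU := ⟨hw, hwU⟩
      calc ‖q.eval w‖
          ≤ ‖p.eval w‖ + ‖(((t:ℝ):ℂ) * Q.eval w)‖ := by
            rw [hqev]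
            exact norm_sub_le _ _
        _ ≤ s' + t * B := by
            rw [norm_mul, htabs]
            have h5 := hub w hwKU
            have h6 := hQb w hw
            nlinarith [norm_nonneg (Q.eval w)]
        _ ≤ s' + (1 - s')/2 := by linarith
        _ = (1 + s')/2 := by ring
        _ ≤ a := le_max_right _ _
  have ha1 : a < 1 := max_lt (by linarith) (by linarith)
  have := key_bound K hK hinf z₀ n q hqd a hqb (le_of_eq hqzabs.symm)
  linarith

end Stmt6Aux

/-- Existence and uniqueness of the polynomial of extremal growth relative to `K` at
`z₀`: the unique `p` of degree at most `n` with sup norm `1` on `K` and `p(z₀) = M_n`. -/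
theorem stmt6 (K : Set ℂ) (hK : IsCompact K) (hinf : K.Infinite) (z₀ : ℂ) (hz₀ : z₀ ∉ K)
    (n : ℕ) :
    ∃! p : Polynomial ℂ, p.natDegree ≤ n ∧ supNorm K p = 1 ∧
      p.eval z₀ = ((Mgrow K z₀ n : ℝ) : ℂ) := by
  obtain ⟨p, hp⟩ := Stmt6Aux.exists_good K hK hinf z₀ n
  exact ⟨p, hp, fun q hq => Stmt6Aux.uniq K hK hinf z₀ hz₀ n q p hq hp⟩
end

section
/- Let K ⊂ ℂ be compact, z₀ ∈ ℂ, and n ∈ ℕ with n+1 ≤ #K. Then max over probability measures ν on K of λ_n(ν,z₀) equals B_n(ν_n,z₀)^{−1} = [sup_{p ∈ 𝒫_n} |p(z₀)|²/‖p‖_K²]^{−1}; equivalently, for any optimal prediction measure ν_n of order n, B_n(ν_n,z₀) = sup_{p∈𝒫_n, p≠0} |p(z₀)|²/‖p‖_K². -/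
open MeasureTheory Filter Real

section Aux
open Polynomial

noncomputable def toP (n : ℕ) (c : Fin (n+1) → ℂ) : Polynomial ℂ :=
  ∑ j : Fin (n+1), Polynomial.C (c j) * Polynomial.X ^ (j : ℕ)

lemma toP_natDegree (n : ℕ) (c : Fin (n+1) → ℂ) : (toP n c).natDegree ≤ n := by
  refine (Polynomial.natDegree_sum_le _ _).trans ?_
  simp only [Finset.fold_max_le]
  refine ⟨Nat.zero_le _, fun j _ => ?_⟩
  exact (Polynomial.natDegree_C_mul_le _ _).trans (by simpa using Nat.lt_succ_iff.mp j.isLt)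

lemma toP_eval (n : ℕ) (c : Fin (n+1) → ℂ) (z : ℂ) :
    (toP n c).eval z = ∑ j : Fin (n+1), c j * z ^ (j : ℕ) := by
  simp [toP, Polynomial.eval_finset_sum]

lemma toP_coeff (n : ℕ) (c : Fin (n+1) → ℂ) (j : Fin (n+1)) :
    (toP n c).coeff (j : ℕ) = c j := by
  rw [toP, Polynomial.finset_sum_coeff]
  rw [Finset.sum_eq_single j]
  · simp
  · intro b _ hb
    have : ((j:ℕ) = (b:ℕ)) = False := by
      simp only [eq_iff_iff, iff_false]
      exact fun h => hb (Fin.ext h.symm)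
    simp [Polynomial.coeff_C_mul, Polynomial.coeff_X_pow, this]
  · simp

lemma eval_toP_coeffs (n : ℕ) (p : Polynomial ℂ) (hp : p.natDegree ≤ n) (z : ℂ) :
    (toP n (fun j => p.coeff (j : ℕ))).eval z = p.eval z := by
  rw [toP_eval, Fin.sum_univ_eq_sum_range (fun j => p.coeff j * z ^ j)]
  exact (Polynomial.eval_eq_sum_range' (Nat.lt_succ_of_le hp) z).symm


lemma absEval_continuous (p : Polynomial ℂ) : Continuous fun w => ‖p.eval w‖ :=
  continuous_norm.comp p.continuous

lemma supNorm_bddAbove {K : Set ℂ} (hK : IsCompact K) (p : Polynomial ℂ) :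
    BddAbove ((fun w => ‖p.eval w‖) '' K) :=
  (hK.image (absEval_continuous p)).bddAbove

lemma le_supNorm {K : Set ℂ} (hK : IsCompact K) (p : Polynomial ℂ) {w : ℂ} (hw : w ∈ K) :
    ‖p.eval w‖ ≤ supNorm K p :=
  le_csSup (supNorm_bddAbove hK p) ⟨w, hw, rfl⟩

lemma supNorm_le {K : Set ℂ} {a : ℝ} (p : Polynomial ℂ) (hne : K.Nonempty)
    (h : ∀ w ∈ K, ‖p.eval w‖ ≤ a) : supNorm K p ≤ a :=
  csSup_le (hne.image _) (by rintro r ⟨w, hw, rfl⟩; exact h w hw)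

lemma supNorm_nonneg {K : Set ℂ} (hK : IsCompact K) (hne : K.Nonempty) (p : Polynomial ℂ) :
    0 ≤ supNorm K p := by
  obtain ⟨w, hw⟩ := hne
  exact (norm_nonneg _).trans (le_supNorm hK p hw)

lemma exists_supNorm_eq {K : Set ℂ} (hK : IsCompact K) (hne : K.Nonempty) (p : Polynomial ℂ) :
    ∃ w ∈ K, ‖p.eval w‖ = supNorm K p := by
  obtain ⟨w, hw, hmax⟩ := hK.exists_sSup_image_eq hne (absEval_continuous p).continuousOn
  exact ⟨w, hw, hmax.symm⟩

lemma supNorm_congr {K : Set ℂ} {p q : Polynomial ℂ} (h : ∀ w ∈ K, p.eval w = q.eval w) :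
    supNorm K p = supNorm K q := by
  unfold _root_.supNorm
  congr 1
  ext r
  constructor
  · rintro ⟨w, hw, rfl⟩; exact ⟨w, hw, by simp only [h w hw]⟩
  · rintro ⟨w, hw, rfl⟩; exact ⟨w, hw, by simp only [h w hw]⟩

lemma supNorm_eq_zero {K : Set ℂ} (hK : IsCompact K) {p : Polynomial ℂ} {n : ℕ}
    (hdeg : p.natDegree ≤ n) (hcard : ∃ S : Finset ℂ, ↑S ⊆ K ∧ S.card = n + 1)
    (h : supNorm K p = 0) : p = 0 := by
  obtain ⟨S, hSK, hS⟩ := hcard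
  refine Polynomial.eq_zero_of_natDegree_lt_card_of_eval_eq_zero' p S (fun w hw => ?_) ?_
  · have h1 : ‖p.eval w‖ ≤ 0 := h ▸ le_supNorm hK p (hSK hw)
    have h2 := (norm_nonneg (p.eval w)).antisymm h1
    exact (norm_eq_zero.mp h2.symm)
  · rw [hS]; exact Nat.lt_succ_of_le hdeg

lemma supNorm_pos {K : Set ℂ} (hK : IsCompact K) (hne : K.Nonempty) {p : Polynomial ℂ} {n : ℕ}
    (hdeg : p.natDegree ≤ n) (hcard : ∃ S : Finset ℂ, ↑S ⊆ K ∧ S.card = n + 1)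
    (hp : p ≠ 0) : 0 < supNorm K p := by
  rcases (supNorm_nonneg hK hne p).lt_or_eq with h | h
  · exact h
  · exact absurd (supNorm_eq_zero hK hdeg hcard h.symm) hp


section NN
variable {K : Set ℂ} {n : ℕ}

/-- There is a constant controlling `supNorm` by the coefficient norm. -/
lemma exists_bound (hK : IsCompact K) (n : ℕ) :
    ∃ C : ℝ, 0 ≤ C ∧ ∀ (c : Fin (n+1) → ℂ) (w : ℂ), w ∈ K →
      ‖(toP n c).eval w‖ ≤ C * ‖c‖ := by
  obtain ⟨r, hr⟩ := hK.isBounded.subset_closedBall 0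
  set B := max r 0 with hB
  refine ⟨∑ j : Fin (n+1), B ^ (j : ℕ), Finset.sum_nonneg fun j _ =>
    pow_nonneg (le_max_right _ _) _, fun c w hw => ?_⟩
  rw [toP_eval, Finset.sum_mul]
  refine (norm_sum_le _ _).trans (Finset.sum_le_sum fun j _ => ?_)
  rw [norm_mul, norm_pow]
  have hwB : ‖w‖ ≤ B := by
    have := hr hw
    simp only [Metric.mem_closedBall, dist_zero_right] at this
    exact this.trans (le_max_left _ _)
  have h1 : ‖c j‖ ≤ ‖c‖ := by
    simpa using norm_le_pi_norm c j
  calc ‖c j‖ * ‖w‖ ^ (j:ℕ)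
      ≤ ‖c‖ * B ^ (j:ℕ) := by
        exact mul_le_mul h1 (pow_le_pow_left₀ (norm_nonneg w) hwB _)
          (pow_nonneg (norm_nonneg w) _) (norm_nonneg c)
    _ = B ^ (j:ℕ) * ‖c‖ := mul_comm _ _

lemma NN_sub_le (hK : IsCompact K) (hne : K.Nonempty) {C : ℝ}
    (hC : ∀ (c : Fin (n+1) → ℂ) (w : ℂ), w ∈ K →
      ‖(toP n c).eval w‖ ≤ C * ‖c‖) (c d : Fin (n+1) → ℂ) :
    supNorm K (toP n c) ≤ supNorm K (toP n d) + C * ‖c - d‖ := by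
  refine supNorm_le _ hne fun w hw => ?_
  have h1 : (toP n c).eval w = (toP n d).eval w + (toP n (c - d)).eval w := by
    simp only [toP_eval, Pi.sub_apply, sub_mul, Finset.sum_sub_distrib]
    ring
  rw [h1]
  exact (norm_add_le _ _).trans
    (add_le_add (le_supNorm hK _ hw) (hC (c - d) w hw))

lemma NN_continuous (hK : IsCompact K) (hne : K.Nonempty) :
    Continuous fun c : Fin (n+1) → ℂ => supNorm K (toP n c) := by
  obtain ⟨C, hC0, hC⟩ := exists_bound hK n
  rw [Metric.continuous_iff]
  intro c ε hε
  rcases eq_or_lt_of_le hC0 with hC0' | hC0'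
  · refine ⟨1, one_pos, fun d _ => ?_⟩
    have h1 := NN_sub_le hK hne hC d c
    have h2 := NN_sub_le hK hne hC c d
    rw [← hC0'] at h1 h2
    rw [Real.dist_eq, abs_sub_lt_iff]
    constructor <;> nlinarith [hε]
  · refine ⟨ε / C, div_pos hε hC0', fun d hd => ?_⟩
    have h1 := NN_sub_le hK hne hC d c
    have h2 := NN_sub_le hK hne hC c d
    have hdc : ‖d - c‖ = dist d c := (dist_eq_norm d c).symm
    have hcd : ‖c - d‖ = dist d c := by rw [dist_comm]; exact (dist_eq_norm c d).symm
    rw [Real.dist_eq, abs_sub_lt_iff]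
    rw [hdc] at h1; rw [hcd] at h2
    have : C * dist d c < ε := by
      rw [lt_div_iff₀ hC0'] at hd; nlinarith
    constructor <;> nlinarith

lemma NN_smul_le (hK : IsCompact K) (hne : K.Nonempty) (a : ℝ) (c : Fin (n+1) → ℂ) :
    supNorm K (toP n (a • c)) ≤ |a| * supNorm K (toP n c) := by
  refine supNorm_le _ hne fun w hw => ?_
  have h1 : (toP n (a • c)).eval w = (a : ℂ) * (toP n c).eval w := by
    simp only [toP_eval, Pi.smul_apply, Complex.real_smul, Finset.mul_sum]
    exact Finset.sum_congr rfl fun j _ => mul_assoc _ _ _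
  rw [h1, norm_mul, Complex.norm_real, Real.norm_eq_abs]
  exact mul_le_mul_of_nonneg_left (le_supNorm hK _ hw) (abs_nonneg a)

lemma NN_smul_ge (hK : IsCompact K) (hne : K.Nonempty) {a : ℝ} (ha : a ≠ 0)
    (c : Fin (n+1) → ℂ) :
    |a| * supNorm K (toP n c) ≤ supNorm K (toP n (a • c)) := by
  have h1 := NN_smul_le hK hne (n := n) a⁻¹ (a • c)
  rw [smul_smul, inv_mul_cancel₀ ha, one_smul] at h1
  have ha' : (0:ℝ) < |a| := abs_pos.mpr ha
  rw [abs_inv] at h1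
  calc |a| * supNorm K (toP n c) ≤ |a| * (|a|⁻¹ * supNorm K (toP n (a • c))) := by
        exact mul_le_mul_of_nonneg_left h1 (abs_nonneg a)
    _ = supNorm K (toP n (a • c)) := by field_simp

lemma exists_kappa (hK : IsCompact K) (hne : K.Nonempty)
    (hcard : ∃ S : Finset ℂ, ↑S ⊆ K ∧ S.card = n + 1) :
    ∃ κ : ℝ, 0 < κ ∧ ∀ c : Fin (n+1) → ℂ, κ * ‖c‖ ≤ supNorm K (toP n c) := by
  have hsph : IsCompact (Metric.sphere (0 : Fin (n+1) → ℂ) 1) := isCompact_sphere _ _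
  have hsphne : (Metric.sphere (0 : Fin (n+1) → ℂ) 1).Nonempty :=
    NormedSpace.sphere_nonempty.mpr zero_le_one
  obtain ⟨u, hu, humin⟩ := hsph.exists_isMinOn hsphne (NN_continuous hK hne).continuousOn
  set κ := supNorm K (toP n u) with hκdef
  have hune : u ≠ 0 := by
    intro h
    rw [h] at hu
    simp at hu
  have hκpos : 0 < κ := by
    rcases (supNorm_nonneg hK hne (toP n u)).lt_or_eq with h | h
    · exact h
    · exfalso
      have := supNorm_eq_zero hK (toP_natDegree n u) hcard h.symm
      apply hune
      funext j
      have := congrArg (fun p => Polynomial.coeff p (j:ℕ)) this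
      simpa [toP_coeff] using this
  refine ⟨κ, hκpos, fun c => ?_⟩
  rcases eq_or_ne c 0 with rfl | hc
  · simp only [norm_zero, mul_zero]
    exact supNorm_nonneg hK hne _
  · have hcn : (0:ℝ) < ‖c‖ := norm_pos_iff.mpr hc
    set u' : Fin (n+1) → ℂ := ‖c‖⁻¹ • c with hu'
    have hu'mem : u' ∈ Metric.sphere (0 : Fin (n+1) → ℂ) 1 := by
      simp [hu', norm_smul, abs_of_pos (inv_pos.mpr hcn), inv_mul_cancel₀ hcn.ne']
    have h1 : κ ≤ supNorm K (toP n u') := humin hu'mem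
    have h2 := NN_smul_ge hK hne (a := ‖c‖⁻¹) (inv_ne_zero hcn.ne') c
    rw [← hu'] at h2
    rw [abs_of_pos (inv_pos.mpr hcn)] at h2
    -- h2 : ‖c‖⁻¹ * NN c ≤ NN u'
    have h3 := NN_smul_le hK hne (n := n) ‖c‖⁻¹ c
    rw [← hu', abs_of_pos (inv_pos.mpr hcn)] at h3
    -- κ ≤ NN u' ≤ ‖c‖⁻¹ * NN c
    have h4 : κ ≤ ‖c‖⁻¹ * supNorm K (toP n c) := h1.trans h3
    calc κ * ‖c‖ ≤ (‖c‖⁻¹ * supNorm K (toP n c)) * ‖c‖ :=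
          mul_le_mul_of_nonneg_right h4 hcn.le
      _ = supNorm K (toP n c) := by field_simp

end NN

lemma exists_pstar {K : Set ℂ} {n : ℕ} (hK : IsCompact K) (hne : K.Nonempty)
    (hcard : ∃ S : Finset ℂ, ↑S ⊆ K ∧ S.card = n + 1) (z₀ : ℂ) :
    ∃ ps : Polynomial ℂ, ps.natDegree ≤ n ∧ ps.eval z₀ = 1 ∧
      ∀ q : Polynomial ℂ, q.natDegree ≤ n → q.eval z₀ = 1 →
        supNorm K ps ≤ supNorm K q := by
  obtain ⟨κ, hκ, hκle⟩ := exists_kappa hK hne hcard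
  have hevcont : Continuous fun c : Fin (n+1) → ℂ => (toP n c).eval z₀ := by
    have : (fun c : Fin (n+1) → ℂ => (toP n c).eval z₀)
        = fun c : Fin (n+1) → ℂ => ∑ j : Fin (n+1), c j * z₀ ^ (j:ℕ) := by
      funext c; exact toP_eval n c z₀
    rw [this]
    exact continuous_finset_sum _ fun j _ => (continuous_apply j).mul continuous_const
  set c₀ : Fin (n+1) → ℂ := Pi.single 0 1 with hc₀
  have hc₀A : (toP n c₀).eval z₀ = 1 := by
    rw [toP_eval]
    rw [Finset.sum_eq_single 0]
    · simp [hc₀]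
    · intro b _ hb
      simp [hc₀, Pi.single_apply, hb]
    · simp
  set NN := fun c : Fin (n+1) → ℂ => supNorm K (toP n c) with hNN
  set S := {c : Fin (n+1) → ℂ | (toP n c).eval z₀ = 1 ∧ NN c ≤ NN c₀} with hS
  have hSclosed : IsClosed S := by
    refine IsClosed.inter ?_ ?_
    · exact isClosed_eq hevcont continuous_const
    · exact isClosed_le (NN_continuous hK hne) continuous_const
  have hSbdd : Bornology.IsBounded S := by
    refine (Metric.isBounded_closedBall (x := (0 : Fin (n+1) → ℂ))
      (r := NN c₀ / κ)).subset ?_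
    rintro c ⟨-, hc2⟩
    simp only [Metric.mem_closedBall, dist_zero_right]
    rw [le_div_iff₀ hκ]
    calc ‖c‖ * κ = κ * ‖c‖ := mul_comm _ _
      _ ≤ NN c := hκle c
      _ ≤ NN c₀ := hc2
  have hScompact : IsCompact S := Metric.isCompact_of_isClosed_isBounded hSclosed hSbdd
  have hSne : S.Nonempty := ⟨c₀, hc₀A, le_refl _⟩
  obtain ⟨cs, hcs, hmin⟩ := hScompact.exists_isMinOn hSne (NN_continuous hK hne).continuousOn
  refine ⟨toP n cs, toP_natDegree n cs, hcs.1, fun q hq hq1 => ?_⟩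
  set cq : Fin (n+1) → ℂ := fun j => q.coeff (j:ℕ) with hcq
  have hqe : ∀ z, (toP n cq).eval z = q.eval z := eval_toP_coeffs n q hq
  have hNNq : NN cq = supNorm K q := supNorm_congr fun w _ => hqe w
  rcases le_or_gt (NN cq) (NN c₀) with h | h
  · have hmem : cq ∈ S := ⟨by rw [hqe]; exact hq1, h⟩
    have h2 : NN cs ≤ NN cq := hmin hmem
    rw [hNNq] at h2
    exact h2
  · have h1 : NN cs ≤ NN c₀ := hmin (⟨hc₀A, le_refl _⟩ : c₀ ∈ S)
    have h2 : supNorm K (toP n cs) ≤ NN cq := le_trans h1 h.le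
    rw [hNNq] at h2
    exact h2


lemma sum_castLE {M : Type*} [AddCommMonoid M] {k d : ℕ} (hk : k ≤ d) (f : Fin d → M)
    (hf : ∀ i : Fin d, ¬((i : ℕ) < k) → f i = 0) :
    ∑ i : Fin d, f i = ∑ j : Fin k, f (Fin.castLE hk j) := by
  have h1 : ∑ i ∈ Finset.univ.map (Fin.castLEEmb hk), f i = ∑ i : Fin d, f i := by
    apply Finset.sum_subset (Finset.subset_univ _)
    intro i _ hi
    apply hf
    intro hik
    exact hi (Finset.mem_map.mpr ⟨⟨(i : ℕ), hik⟩, Finset.mem_univ _, Fin.ext rfl⟩)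
  rw [← h1, Finset.sum_map]
  rfl

lemma isCompact_convexHull_fd {F : Type*} [NormedAddCommGroup F] [NormedSpace ℝ F]
    [FiniteDimensional ℝ F] {s : Set F} (hs : IsCompact s) :
    IsCompact (convexHull ℝ s) := by
  rcases s.eq_empty_or_nonempty with rfl | hsne
  · simp
  obtain ⟨y₀, hy₀⟩ := hsne
  set d := Module.finrank ℝ F + 1 with hd
  set T : Set ((Fin d → ℝ) × (Fin d → F)) := (stdSimplex ℝ (Fin d)) ×ˢ (Set.univ.pi fun _ => s)
    with hT
  have hTc : IsCompact T := (isCompact_stdSimplex (𝕜 := ℝ) (ι := Fin d)).prod (isCompact_univ_pi fun _ => hs)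
  have hfc : Continuous fun p : (Fin d → ℝ) × (Fin d → F) => ∑ i, p.1 i • p.2 i :=
    continuous_finset_sum _ fun i _ =>
      ((continuous_apply i).comp continuous_fst).smul ((continuous_apply i).comp continuous_snd)
  have himage : convexHull ℝ s
      = (fun p : (Fin d → ℝ) × (Fin d → F) => ∑ i, p.1 i • p.2 i) '' T := by
    apply Set.Subset.antisymm
    · intro x hx
      obtain ⟨ι, hfin, z, w, hrange, hai, hwpos, hw1, hx⟩ :=
        eq_pos_convex_span_of_mem_convexHull hx
      have hk : Fintype.card ι ≤ d := by
        refine hai.card_le_finrank_succ.trans ?_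
        exact Nat.add_le_add_right (Submodule.finrank_le _) 1
      set k := Fintype.card ι with hkdef
      set e := Fintype.equivFin ι with he
      set w' : Fin d → ℝ := fun i => if h : (i : ℕ) < k then w (e.symm ⟨i, h⟩) else 0 with hw'
      set z' : Fin d → F := fun i => if h : (i : ℕ) < k then z (e.symm ⟨i, h⟩) else y₀ with hz'
      have hw'0 : ∀ i : Fin d, ¬((i : ℕ) < k) → w' i = 0 := by
        intro i hi; simp only [hw', dif_neg hi]
      have hwz'0 : ∀ i : Fin d, ¬((i : ℕ) < k) → w' i • z' i = 0 := by
        intro i hi; simp only [hw', dif_neg hi, zero_smul]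
      have hcast : ∀ j : Fin k, w' (Fin.castLE hk j) = w (e.symm j) := by
        intro j
        simp only [hw']
        rw [dif_pos (show ((Fin.castLE hk j : Fin d) : ℕ) < k from j.isLt)]
        exact congrArg (fun t => w (e.symm t)) (Fin.ext rfl)
      have hcast2 : ∀ j : Fin k, z' (Fin.castLE hk j) = z (e.symm j) := by
        intro j
        simp only [hz']
        rw [dif_pos (show ((Fin.castLE hk j : Fin d) : ℕ) < k from j.isLt)]
        exact congrArg (fun t => z (e.symm t)) (Fin.ext rfl)
      refine ⟨⟨w', z'⟩, ⟨⟨fun i => ?_, ?_⟩, fun i _ => ?_⟩, ?_⟩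
      · simp only [hw']
        split
        · exact (hwpos _).le
        · exact le_refl 0
      · rw [sum_castLE hk w' hw'0]
        simp_rw [hcast]
        rw [Equiv.sum_comp e.symm w]
        exact hw1
      · simp only [hz']
        split
        · exact hrange (Set.mem_range_self _)
        · exact hy₀
      · simp only
        rw [sum_castLE hk (fun i => w' i • z' i) hwz'0]
        simp_rw [hcast, hcast2]
        rw [Equiv.sum_comp e.symm (fun i => w i • z i)]
        exact hx
    · rintro x ⟨⟨w, z⟩, ⟨⟨hw0, hw1⟩, hz⟩, rfl⟩
      exact (convex_convexHull ℝ s).sum_mem (fun i _ => hw0 i) hw1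
        (fun i _ => subset_convexHull ℝ s (hz i (Set.mem_univ i)))
  rw [himage]
  exact hTc.image hfc

set_option maxHeartbeats 1000000 in
lemma perturb {K : Set ℂ} (hK : IsCompact K) (hne : K.Nonempty) {n : ℕ} {z₀ : ℂ}
    {ps g : Polynomial ℂ} (hps : ps.natDegree ≤ n) (hps1 : ps.eval z₀ = 1)
    (hmin : ∀ q : Polynomial ℂ, q.natDegree ≤ n → q.eval z₀ = 1 →
      supNorm K ps ≤ supNorm K q)
    (hm : 0 < supNorm K ps)
    (hg : g.natDegree ≤ n) (hg0 : g.eval z₀ = 0) {ε : ℝ} (hε : 0 < ε)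
    (hEg : ∀ w ∈ K, ‖ps.eval w‖ = supNorm K ps →
      ε ≤ ((starRingEnd ℂ) (ps.eval w) * g.eval w).re) : False := by
  set m := supNorm K ps with hmdef
  set h : ℂ → ℝ := fun w => ((starRingEnd ℂ) (ps.eval w) * g.eval w).re with hh
  have hcont : Continuous h :=
    Complex.continuous_re.comp ((RCLike.continuous_conj.comp ps.continuous).mul g.continuous)
  set U : Set ℂ := {w | ε/2 < h w} with hU
  have hUopen : IsOpen U := isOpen_lt continuous_const hcont
  set C₂ := K \ U with hC₂def
  have hC₂c : IsCompact C₂ := hK.diff hUopen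
  set G := supNorm K g with hG
  have hGb : ∀ w ∈ K, ‖g.eval w‖ ≤ G := fun w hw => le_supNorm hK g hw
  have hG0 : 0 ≤ G := by
    obtain ⟨w, hw⟩ := hne
    exact (norm_nonneg _).trans (hGb w hw)
  obtain ⟨m₁, hm₁lt, hm₁b⟩ : ∃ m₁ : ℝ, m₁ < m ∧ ∀ w ∈ C₂, ‖ps.eval w‖ ≤ m₁ := by
    by_cases hC₂ : C₂.Nonempty
    · obtain ⟨w₁, hw₁, hmax⟩ := hC₂c.exists_isMaxOn hC₂ (absEval_continuous ps).continuousOn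
      refine ⟨‖ps.eval w₁‖, ?_, fun w hw => hmax hw⟩
      rcases (le_supNorm hK ps hw₁.1).lt_or_eq with hlt | heq
      · exact hlt
      · exfalso
        have h1 : ε ≤ h w₁ := hEg w₁ hw₁.1 heq
        have h2 : ¬ (ε/2 < h w₁) := hw₁.2
        push_neg at h2
        linarith
    · exact ⟨0, hm, fun w hw => absurd ⟨w, hw⟩ hC₂⟩
  set δ := m - m₁ with hδdef
  have hδ : 0 < δ := by simp [hδdef]; linarith
  set t := min (ε / (2*(G^2+1))) (δ / (G+1)) with ht
  have ht0 : 0 < t := lt_min (div_pos hε (by positivity)) (div_pos hδ (by positivity))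
  have ht1 : t * (G^2+1) ≤ ε / 2 := by
    calc t * (G^2+1) ≤ (ε / (2*(G^2+1))) * (G^2+1) := by
          exact mul_le_mul_of_nonneg_right (min_le_left _ _) (by positivity)
      _ = ε / 2 := by field_simp
  have ht2 : t * (G+1) ≤ δ := by
    calc t * (G+1) ≤ (δ / (G+1)) * (G+1) := by
          exact mul_le_mul_of_nonneg_right (min_le_right _ _) (by positivity)
      _ = δ := by field_simp
  set pt := ps - Polynomial.C (t:ℂ) * g with hptdef
  have hptdeg : pt.natDegree ≤ n :=
    le_trans (Polynomial.natDegree_sub_le _ _)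
      (max_le hps ((Polynomial.natDegree_C_mul_le _ _).trans hg))
  have hpt1 : pt.eval z₀ = 1 := by simp [hptdef, hps1, hg0]
  have hpteval : ∀ w, pt.eval w = ps.eval w - (t:ℂ) * g.eval w := by
    intro w; simp [hptdef]
  have hsq : ∀ w, (‖pt.eval w‖)^2
      = (‖ps.eval w‖)^2 + t^2 * (‖g.eval w‖)^2 - 2 * t * h w := by
    intro w
    rw [hpteval w, Complex.sq_norm, Complex.normSq_sub, Complex.sq_norm, Complex.sq_norm]
    congr 1
    · congr 1
      rw [Complex.normSq_mul]
      rw [Complex.normSq_ofReal]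
      ring
    · rw [map_mul, Complex.conj_ofReal]
      have : ps.eval w * ((t:ℂ) * (starRingEnd ℂ) (g.eval w))
          = (t:ℂ) * (ps.eval w * (starRingEnd ℂ) (g.eval w)) := by ring
      rw [this, Complex.re_ofReal_mul]
      have : (ps.eval w * (starRingEnd ℂ) (g.eval w)).re
          = ((starRingEnd ℂ) (ps.eval w) * g.eval w).re := by
        rw [← Complex.conj_re (ps.eval w * (starRingEnd ℂ) (g.eval w))]
        rw [map_mul, Complex.conj_conj]
      rw [this]
      ring
  obtain ⟨w₂, hw₂K, hw₂eq⟩ := exists_supNorm_eq hK hne pt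
  have hmle : m ≤ supNorm K pt := hmin pt hptdeg hpt1
  have hcontr : supNorm K pt < m := by
    rw [← hw₂eq]
    by_cases hw₂U : w₂ ∈ U
    · have h1 : ‖ps.eval w₂‖ ≤ m := le_supNorm hK ps hw₂K
      have h2 : ‖g.eval w₂‖ ≤ G := hGb w₂ hw₂K
      have h3 : ε/2 < h w₂ := hw₂U
      have habs1 : (0:ℝ) ≤ ‖ps.eval w₂‖ := norm_nonneg _
      have habs2 : (0:ℝ) ≤ ‖g.eval w₂‖ := norm_nonneg _
      have e1 : (‖ps.eval w₂‖)^2 ≤ m^2 := by nlinarith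
      have e2 : t^2 * (‖g.eval w₂‖)^2 ≤ t^2 * G^2 :=
        mul_le_mul_of_nonneg_left (pow_le_pow_left₀ habs2 h2 2) (sq_nonneg t)
      have e3 : t^2 * G^2 ≤ t * (ε/2) := by nlinarith [mul_le_mul_of_nonneg_left ht1 ht0.le]
      have e4 : t * ε < 2 * t * h w₂ := by nlinarith [mul_lt_mul_of_pos_left h3 ht0]
      have hb : (‖pt.eval w₂‖)^2 ≤ m^2 - t*ε/2 := by
        rw [hsq w₂]; linarith
      nlinarith [norm_nonneg (pt.eval w₂), hm,
        mul_pos ht0 hε]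
    · have h1 : ‖ps.eval w₂‖ ≤ m₁ := hm₁b w₂ ⟨hw₂K, hw₂U⟩
      have h2 : ‖g.eval w₂‖ ≤ G := hGb w₂ hw₂K
      have htri : ‖pt.eval w₂‖
          ≤ ‖ps.eval w₂‖ + ‖(t:ℂ) * g.eval w₂‖ := by
        rw [hpteval w₂]
        exact norm_sub_le _ _
      have habst : ‖(t:ℂ) * g.eval w₂‖ = t * ‖g.eval w₂‖ := by
        rw [norm_mul, Complex.norm_real, Real.norm_eq_abs, abs_of_pos ht0]
      have : ‖pt.eval w₂‖ ≤ m₁ + t * G := by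
        rw [habst] at htri
        have : t * ‖g.eval w₂‖ ≤ t * G := mul_le_mul_of_nonneg_left h2 ht0.le
        linarith
      have h5 : m₁ + t * G < m := by nlinarith [ht2, ht0]
      linarith
  linarith


noncomputable def cOf (n : ℕ) (f : (Fin (n+1) → ℂ) →L[ℝ] ℝ) : Fin (n+1) → ℂ :=
  fun j => ((f (Pi.single j 1) : ℝ) : ℂ) - Complex.I * ((f (Pi.single j Complex.I) : ℝ) : ℂ)

lemma cOf_spec (n : ℕ) (f : (Fin (n+1) → ℂ) →L[ℝ] ℝ) (x : Fin (n+1) → ℂ) :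
    f x = (∑ j, cOf n f j * x j).re := by
  have hx : x = ∑ j, Pi.single j (x j) := by
    rw [Finset.univ_sum_single]
  conv_lhs => rw [hx]
  rw [map_sum, Complex.re_sum]
  apply Finset.sum_congr rfl
  intro j _
  have hsingle : Pi.single j (x j)
      = (x j).re • (Pi.single j (1:ℂ) : Fin (n+1) → ℂ)
        + (x j).im • (Pi.single j Complex.I : Fin (n+1) → ℂ) := by
    rw [← Pi.single_smul, ← Pi.single_smul, ← Pi.single_add]
    congr 1
    simp only [Complex.real_smul, mul_one]
    rw [Complex.re_add_im]
  rw [hsingle, map_add, f.map_smul, f.map_smul]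
  simp only [cOf, smul_eq_mul, Complex.mul_re, Complex.sub_re, Complex.sub_im,
    Complex.ofReal_re, Complex.ofReal_im, Complex.mul_im, Complex.I_re, Complex.I_im]
  ring


noncomputable def pairL (n : ℕ) (c : Fin (n+1) → ℂ) : (Fin (n+1) → ℂ) →ₗ[ℝ] ℝ where
  toFun x := (∑ j, c j * x j).re
  map_add' x y := by
    simp only [Pi.add_apply, mul_add, Finset.sum_add_distrib, Complex.add_re]
  map_smul' r x := by
    simp only [Pi.smul_apply, Complex.real_smul, RingHom.id_apply, smul_eq_mul]
    rw [← Complex.re_ofReal_mul, Finset.mul_sum]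
    congr 1
    exact Finset.sum_congr rfl fun j _ => by ring

/-- The fundamental representation: an optimal polynomial admits a discrete
"reproducing" measure supported on its peak set. -/
lemma exists_rep {K : Set ℂ} {n : ℕ} {z₀ : ℂ} (hK : IsCompact K) (hne : K.Nonempty)
    {ps : Polynomial ℂ} (hps : ps.natDegree ≤ n) (hps1 : ps.eval z₀ = 1)
    (hmin : ∀ q : Polynomial ℂ, q.natDegree ≤ n → q.eval z₀ = 1 →
      supNorm K ps ≤ supNorm K q)
    (hm : 0 < supNorm K ps) :
    ∃ (k : ℕ) (a : Fin k → ℝ) (x : Fin k → ℂ),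
      (∀ i, 0 ≤ a i) ∧ (∑ i, a i = 1) ∧ (∀ i, x i ∈ K) ∧
      (∀ i, ‖ps.eval (x i)‖ = supNorm K ps) ∧
      ∀ q : Polynomial ℂ, q.natDegree ≤ n →
        ∑ i, a i * ((starRingEnd ℂ) (ps.eval (x i)) * q.eval (x i)).re
          = (supNorm K ps)^2 * (q.eval z₀).re := by
  classical
  set m := supNorm K ps with hmdef
  set E : Set ℂ := K ∩ {w | ‖ps.eval w‖ = m} with hE
  have hEc : IsCompact E :=
    hK.inter_right (isClosed_eq (absEval_continuous ps) continuous_const)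
  set ψ : ℂ → (Fin (n+1) → ℂ) :=
    fun w => fun j => (starRingEnd ℂ) (ps.eval w) * w ^ (j : ℕ) with hψ
  have hψc : Continuous ψ := by
    apply continuous_pi
    intro j
    exact (RCLike.continuous_conj.comp ps.continuous).mul (continuous_pow (j : ℕ))
  set v : Fin (n+1) → ℂ := fun j => ((m^2 : ℝ) : ℂ) * z₀ ^ (j : ℕ) with hv
  -- pairing computations
  have hpair_psi : ∀ (q : Polynomial ℂ), q.natDegree ≤ n → ∀ w : ℂ,
      (∑ j : Fin (n+1), q.coeff (j:ℕ) * ψ w j).re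
        = ((starRingEnd ℂ) (ps.eval w) * q.eval w).re := by
    intro q hq w
    congr 1
    rw [← eval_toP_coeffs n q hq w, toP_eval]
    rw [Finset.mul_sum]
    apply Finset.sum_congr rfl
    intro j _
    simp only [hψ]
    ring
  have hpair_v : ∀ (q : Polynomial ℂ), q.natDegree ≤ n →
      (∑ j : Fin (n+1), q.coeff (j:ℕ) * v j).re = m^2 * (q.eval z₀).re := by
    intro q hq
    rw [← Complex.re_ofReal_mul]
    congr 1
    rw [← eval_toP_coeffs n q hq z₀, toP_eval, Finset.mul_sum]
    apply Finset.sum_congr rfl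
    intro j _
    simp only [hv]
    ring
  -- the crucial hull membership
  have hvmem : v ∈ convexHull ℝ (ψ '' E) := by
    by_contra hv'
    obtain ⟨f, u, hfu, hfs⟩ := geometric_hahn_banach_point_closed
      (convex_convexHull ℝ _) (isCompact_convexHull_fd (hEc.image hψc)).isClosed hv'
    set c := cOf n f with hc
    set q := toP n c with hq
    have hqdeg : q.natDegree ≤ n := toP_natDegree n c
    have hfψ : ∀ w ∈ E, f (ψ w) = ((starRingEnd ℂ) (ps.eval w) * q.eval w).re := by
      intro w _
      rw [cOf_spec]
      congr 1
      rw [hq, toP_eval, Finset.mul_sum]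
      apply Finset.sum_congr rfl
      intro j _
      simp only [hψ]
      ring
    have hfv : f v = m^2 * (q.eval z₀).re := by
      rw [cOf_spec, ← Complex.re_ofReal_mul]
      congr 1
      rw [hq, toP_eval, Finset.mul_sum]
      apply Finset.sum_congr rfl
      intro j _
      simp only [hv]
      ring
    set g := q - Polynomial.C (q.eval z₀) * ps with hgdef
    have hgdeg : g.natDegree ≤ n :=
      le_trans (Polynomial.natDegree_sub_le _ _)
        (max_le hqdeg ((Polynomial.natDegree_C_mul_le _ _).trans hps))
    have hg0 : g.eval z₀ = 0 := by simp [hgdef, hps1]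
    refine perturb hK hne hps hps1 hmin hm hgdeg hg0 (ε := u - f v) (by linarith) ?_
    intro w hwK hwabs
    have hwE : w ∈ E := ⟨hwK, hwabs⟩
    have h1 : u < f (ψ w) := hfs _ (subset_convexHull ℝ _ (Set.mem_image_of_mem ψ hwE))
    have h2 : ((starRingEnd ℂ) (ps.eval w) * g.eval w).re
        = f (ψ w) - m^2 * (q.eval z₀).re := by
      rw [hfψ w hwE]
      have : (starRingEnd ℂ) (ps.eval w) * g.eval w
          = (starRingEnd ℂ) (ps.eval w) * q.eval w
            - q.eval z₀ * (ps.eval w * (starRingEnd ℂ) (ps.eval w)) := by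
        simp only [hgdef, Polynomial.eval_sub, Polynomial.eval_mul, Polynomial.eval_C]
        ring
      rw [this, Complex.mul_conj]
      have hns : (Complex.normSq (ps.eval w) : ℝ) = m^2 := by
        rw [← Complex.sq_norm, hwabs]
      rw [Complex.sub_re]
      congr 1
      rw [hns]
      rw [mul_comm (q.eval z₀) ((m^2 : ℝ) : ℂ), Complex.re_ofReal_mul]
    rw [h2]
    linarith
  -- extract finite combination
  obtain ⟨ι, hfin, zz, w, hrange, -, hwpos, hw1, hsum⟩ :=
    eq_pos_convex_span_of_mem_convexHull hvmem
  set k := Fintype.card ι with hk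
  set e := Fintype.equivFin ι with he
  have hchoice : ∀ i : ι, ∃ x : ℂ, x ∈ E ∧ ψ x = zz i := by
    intro i
    obtain ⟨x, hx, hx2⟩ := hrange (Set.mem_range_self i)
    exact ⟨x, hx, hx2⟩
  choose xf hxfE hxfψ using hchoice
  refine ⟨k, fun i => w (e.symm i), fun i => xf (e.symm i), fun i => (hwpos _).le, ?_,
    fun i => (hxfE _).1, fun i => (hxfE _).2, ?_⟩
  · rw [Equiv.sum_comp e.symm w]
    exact hw1
  · intro q hq
    have hψsum : ∑ i : ι, w i • zz i = v := hsum
    have happ := congrArg (pairL n (fun j => q.coeff (j:ℕ))) hψsum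
    rw [map_sum] at happ
    simp only [LinearMap.map_smul, smul_eq_mul] at happ
    have hL : ∀ x : Fin (n+1) → ℂ, pairL n (fun j => q.coeff (j:ℕ)) x
        = (∑ j : Fin (n+1), q.coeff (j:ℕ) * x j).re := fun x => rfl
    simp only [hL] at happ
    rw [hpair_v q hq] at happ
    have hstep : ∑ i : Fin k, w (e.symm i) *
        ((starRingEnd ℂ) (ps.eval (xf (e.symm i))) * q.eval (xf (e.symm i))).re
        = ∑ i : ι, w i * ((starRingEnd ℂ) (ps.eval (xf i)) * q.eval (xf i)).re :=
      Equiv.sum_comp e.symm (fun i => w i * ((starRingEnd ℂ) (ps.eval (xf i)) * q.eval (xf i)).re)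
    rw [hstep, ← happ]
    apply Finset.sum_congr rfl
    intro i _
    congr 1
    rw [← hxfψ i]
    exact (hpair_psi q hq (xf i)).symm


lemma christoffel_bddBelow (μ : Measure ℂ) (n : ℕ) (z : ℂ) :
    BddBelow {r : ℝ | ∃ p : Polynomial ℂ, p.natDegree ≤ n ∧ p.eval z = 1 ∧
      r = ∫ w, (‖p.eval w‖) ^ 2 ∂μ} := by
  refine ⟨0, ?_⟩
  rintro r ⟨p, -, -, rfl⟩
  exact integral_nonneg fun w => sq_nonneg _

lemma christoffel_set_nonempty (μ : Measure ℂ) (n : ℕ) (z : ℂ) :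
    {r : ℝ | ∃ p : Polynomial ℂ, p.natDegree ≤ n ∧ p.eval z = 1 ∧
      r = ∫ w, (‖p.eval w‖) ^ 2 ∂μ}.Nonempty :=
  ⟨∫ w, (‖(1 : Polynomial ℂ).eval w‖) ^ 2 ∂μ, 1,
    by simp, by simp, rfl⟩

section Discrete
variable {k : ℕ} (a : Fin k → ℝ) (x : Fin k → ℂ)

noncomputable def discMeas : Measure ℂ :=
  ∑ i : Fin k, (ENNReal.ofReal (a i)) • Measure.dirac (x i)

lemma discMeas_integral (ha : ∀ i, 0 ≤ a i) {f : ℂ → ℝ} (hf : Continuous f) :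
    ∫ w, f w ∂(discMeas a x) = ∑ i : Fin k, a i * f (x i) := by
  have hint : ∀ i : Fin k, Integrable f ((ENNReal.ofReal (a i)) • Measure.dirac (x i)) := by
    intro i
    refine Integrable.smul_measure ?_ ENNReal.ofReal_ne_top
    refine ⟨hf.aestronglyMeasurable, ?_⟩
    rw [HasFiniteIntegral, lintegral_dirac]
    exact ENNReal.coe_lt_top
  rw [discMeas, integral_finset_sum_measure fun i _ => hint i]
  apply Finset.sum_congr rfl
  intro i _
  rw [integral_smul_measure, integral_dirac, ENNReal.toReal_ofReal (ha i), smul_eq_mul]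

lemma discMeas_prob (ha : ∀ i, 0 ≤ a i) (hsum : ∑ i, a i = 1) :
    IsProbabilityMeasure (discMeas a x) := by
  constructor
  rw [discMeas]
  rw [Measure.coe_finset_sum, Finset.sum_apply]
  have : ∀ i : Fin k, ((ENNReal.ofReal (a i)) • Measure.dirac (x i)) Set.univ
      = ENNReal.ofReal (a i) := by
    intro i
    rw [Measure.smul_apply, measure_univ, smul_eq_mul, mul_one]
  simp_rw [this]
  rw [← ENNReal.ofReal_sum_of_nonneg fun i _ => ha i, hsum, ENNReal.ofReal_one]

lemma discMeas_compl {K : Set ℂ} (hK : IsCompact K) (hx : ∀ i, x i ∈ K) :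
    (discMeas a x) Kᶜ = 0 := by
  rw [discMeas, Measure.coe_finset_sum, Finset.sum_apply]
  refine Finset.sum_eq_zero fun i _ => ?_
  rw [Measure.smul_apply, Measure.dirac_apply' _ hK.isClosed.measurableSet.compl]
  rw [Set.indicator_of_notMem (by simp [hx i])]
  simp
end Discrete


/-- χ(discrete optimal measure) computation, lower half. -/
lemma disc_christoffel {K : Set ℂ} {n : ℕ} {z₀ : ℂ} (hK : IsCompact K)
    {ps : Polynomial ℂ} (hps : ps.natDegree ≤ n) (hps1 : ps.eval z₀ = 1)
    {k : ℕ} {a : Fin k → ℝ} {x : Fin k → ℂ}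
    (ha : ∀ i, 0 ≤ a i) (hsum : ∑ i, a i = 1) (hx : ∀ i, x i ∈ K)
    (habs : ∀ i, ‖ps.eval (x i)‖ = supNorm K ps)
    (hrep : ∀ q : Polynomial ℂ, q.natDegree ≤ n →
      ∑ i, a i * ((starRingEnd ℂ) (ps.eval (x i)) * q.eval (x i)).re
        = (supNorm K ps)^2 * (q.eval z₀).re) :
    christoffel (discMeas a x) n z₀ = (supNorm K ps)^2 := by
  set m := supNorm K ps with hm
  apply le_antisymm
  · apply csInf_le (christoffel_bddBelow _ _ _)
    refine ⟨ps, hps, hps1, ?_⟩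
    rw [discMeas_integral a x ha (by continuity)]
    have : ∀ i : Fin k, a i * (‖ps.eval (x i)‖)^2 = a i * m^2 := by
      intro i; rw [habs i]
    rw [Finset.sum_congr rfl fun i _ => this i, ← Finset.sum_mul, hsum, one_mul]
  · apply le_csInf
    · exact ⟨∫ w, (‖(1:Polynomial ℂ).eval w‖)^2 ∂(discMeas a x), 1, by simp, by simp, rfl⟩
    rintro r ⟨p, hp, hp1, rfl⟩
    rw [discMeas_integral a x ha (by continuity)]
    have key : ∀ i : Fin k,
        2 * ((starRingEnd ℂ) (ps.eval (x i)) * p.eval (x i)).re - m^2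
          ≤ (‖p.eval (x i)‖)^2 := by
      intro i
      have h0 : (0:ℝ) ≤ Complex.normSq (p.eval (x i) - ps.eval (x i)) := Complex.normSq_nonneg _
      rw [Complex.normSq_sub] at h0
      have h1 : (p.eval (x i) * (starRingEnd ℂ) (ps.eval (x i))).re
          = ((starRingEnd ℂ) (ps.eval (x i)) * p.eval (x i)).re := by rw [mul_comm]
      have h2 : Complex.normSq (ps.eval (x i)) = m^2 := by
        rw [← Complex.sq_norm, habs i]
      have h3 : Complex.normSq (p.eval (x i)) = (‖p.eval (x i)‖)^2 :=
        (Complex.sq_norm _).symm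
      rw [h1, h2, h3] at h0
      linarith
    have hsum2 : ∑ i, a i * (2 * ((starRingEnd ℂ) (ps.eval (x i)) * p.eval (x i)).re - m^2)
        ≤ ∑ i, a i * (‖p.eval (x i)‖)^2 :=
      Finset.sum_le_sum fun i _ => mul_le_mul_of_nonneg_left (key i) (ha i)
    have hcomp : ∑ i, a i * (2 * ((starRingEnd ℂ) (ps.eval (x i)) * p.eval (x i)).re - m^2)
        = m^2 := by
      have : ∀ i : Fin k, a i * (2 * ((starRingEnd ℂ) (ps.eval (x i)) * p.eval (x i)).re - m^2)
          = 2 * (a i * ((starRingEnd ℂ) (ps.eval (x i)) * p.eval (x i)).re) - m^2 * a i := by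
        intro i; ring
      rw [Finset.sum_congr rfl fun i _ => this i, Finset.sum_sub_distrib, ← Finset.mul_sum,
        ← Finset.mul_sum, hrep p hp, hp1, hsum]
      simp only [Complex.one_re]
      ring
    linarith

lemma christoffel_le_msq {K : Set ℂ} {n : ℕ} {z₀ : ℂ} (hK : IsCompact K) (hne : K.Nonempty)
    {ps : Polynomial ℂ} (hps : ps.natDegree ≤ n) (hps1 : ps.eval z₀ = 1)
    (μ : Measure ℂ) (hμ : IsProbabilityMeasure μ) (hμK : μ Kᶜ = 0) :
    christoffel μ n z₀ ≤ (supNorm K ps)^2 := by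
  set m := supNorm K ps with hm
  refine le_trans (csInf_le (christoffel_bddBelow _ _ _) ⟨ps, hps, hps1, rfl⟩) ?_
  have hae : ∀ᵐ w ∂μ, (‖ps.eval w‖)^2 ≤ m^2 := by
    rw [Filter.eventually_iff, mem_ae_iff]
    refine measure_mono_null (fun w hw => ?_) hμK
    simp only [Set.mem_compl_iff, Set.mem_setOf_eq, not_le] at hw ⊢
    intro hwK
    have := pow_le_pow_left₀ (norm_nonneg _) (le_supNorm hK ps hwK) 2
    exact absurd this (not_le.mpr hw)
  calc ∫ w, (‖ps.eval w‖)^2 ∂μ ≤ ∫ _, m^2 ∂μ :=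
        integral_mono_of_nonneg (Filter.Eventually.of_forall fun w => sq_nonneg _)
          (integrable_const _) hae
    _ = m^2 := by
        rw [integral_const, probReal_univ, one_smul]

end Aux

/-- Minimax identity: the maximum of the Christoffel function over probability measures
on `K` equals the reciprocal of the maximal squared growth at `z₀`; equivalently, for
any optimal prediction measure `ν`, `B_n(ν,z₀) = sup_p |p(z₀)|²/‖p‖_K²`. -/
theorem stmt8 (K : Set ℂ) (hK : IsCompact K) (z₀ : ℂ) (n : ℕ)
    (hcard : ∃ S : Finset ℂ, ↑S ⊆ K ∧ S.card = n + 1) :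
    sSup {r : ℝ | ∃ ν : Measure ℂ, IsProbabilityMeasure ν ∧ ν Kᶜ = 0 ∧
        r = christoffel ν n z₀}
      = (sSup {r : ℝ | ∃ p : Polynomial ℂ, p ≠ 0 ∧ p.natDegree ≤ n ∧
          r = (‖p.eval z₀‖) ^ 2 / (supNorm K p) ^ 2})⁻¹ ∧
    ∀ ν : Measure ℂ, IsProbabilityMeasure ν → ν Kᶜ = 0 →
      (∀ μ : Measure ℂ, IsProbabilityMeasure μ → μ Kᶜ = 0 →
        christoffel μ n z₀ ≤ christoffel ν n z₀) →
      (christoffel ν n z₀)⁻¹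
        = sSup {r : ℝ | ∃ p : Polynomial ℂ, p ≠ 0 ∧ p.natDegree ≤ n ∧
            r = (‖p.eval z₀‖) ^ 2 / (supNorm K p) ^ 2} := by
  have hne : K.Nonempty := by
    obtain ⟨S, hSK, hScard⟩ := hcard
    have hSne : S.Nonempty := Finset.card_pos.mp (by rw [hScard]; omega)
    exact ⟨hSne.choose, hSK hSne.choose_spec⟩
  obtain ⟨ps, hps, hps1, hmin⟩ := exists_pstar hK hne hcard z₀
  set m := supNorm K ps with hm
  have hpsne : ps ≠ 0 := fun h => by simp [h] at hps1
  have hmpos : 0 < m := supNorm_pos hK hne hps hcard hpsne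
  obtain ⟨k, a, x, ha, hsum, hxK, habs, hrep⟩ := exists_rep hK hne hps hps1 hmin hmpos
  have hν₀prob := discMeas_prob a x ha hsum
  have hν₀K := discMeas_compl a x hK hxK
  have hχν₀ : christoffel (discMeas a x) n z₀ = m^2 :=
    disc_christoffel hK hps hps1 ha hsum hxK habs hrep
  have hupper : ∀ μ : Measure ℂ, IsProbabilityMeasure μ → μ Kᶜ = 0 →
      christoffel μ n z₀ ≤ m^2 := fun μ hμ hμK =>
    christoffel_le_msq hK hne hps hps1 μ hμ hμK
  have hS1 : sSup {r : ℝ | ∃ ν : Measure ℂ, IsProbabilityMeasure ν ∧ ν Kᶜ = 0 ∧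
      r = christoffel ν n z₀} = m^2 := by
    apply IsGreatest.csSup_eq
    constructor
    · exact ⟨discMeas a x, hν₀prob, hν₀K, hχν₀.symm⟩
    · rintro r ⟨ν, hν, hνK, rfl⟩
      exact hupper ν hν hνK
  have hS2 : sSup {r : ℝ | ∃ p : Polynomial ℂ, p ≠ 0 ∧ p.natDegree ≤ n ∧
      r = (‖p.eval z₀‖) ^ 2 / (supNorm K p) ^ 2} = (m^2)⁻¹ := by
    apply IsGreatest.csSup_eq
    constructor
    · refine ⟨ps, hpsne, hps, ?_⟩
      rw [hps1, norm_one, one_pow, ← hm]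
      rw [inv_eq_one_div]
    · rintro r ⟨p, hp0, hpdeg, rfl⟩
      have hNp : 0 < supNorm K p := supNorm_pos hK hne hpdeg hcard hp0
      by_cases hz : p.eval z₀ = 0
      · rw [hz]
        rw [norm_zero, zero_pow (by norm_num), zero_div]
        positivity
      · have hq1 : (Polynomial.C (p.eval z₀)⁻¹ * p).eval z₀ = 1 := by
          simp [inv_mul_cancel₀ hz]
        have hqdeg : (Polynomial.C (p.eval z₀)⁻¹ * p).natDegree ≤ n :=
          (Polynomial.natDegree_C_mul_le _ _).trans hpdeg
        have h1 : m ≤ supNorm K (Polynomial.C (p.eval z₀)⁻¹ * p) := hmin _ hqdeg hq1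
        have h2 : supNorm K (Polynomial.C (p.eval z₀)⁻¹ * p)
            ≤ ‖(p.eval z₀)⁻¹‖ * supNorm K p := by
          refine supNorm_le _ hne fun w hw => ?_
          rw [Polynomial.eval_mul, Polynomial.eval_C, norm_mul]
          exact mul_le_mul_of_nonneg_left (le_supNorm hK p hw) (norm_nonneg _)
        have hpz : 0 < ‖p.eval z₀‖ := by
          rcases (norm_nonneg (p.eval z₀)).lt_or_eq with h | h
          · exact h
          · exact absurd (norm_eq_zero.mp h.symm) hz
        have hkey : m * ‖p.eval z₀‖ ≤ supNorm K p := by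
          have h3 := h1.trans h2
          rw [norm_inv] at h3
          calc m * ‖p.eval z₀‖
              ≤ ((‖p.eval z₀‖)⁻¹ * supNorm K p) * ‖p.eval z₀‖ :=
                mul_le_mul_of_nonneg_right h3 hpz.le
            _ = supNorm K p := by field_simp
        have hkey2 : (m * ‖p.eval z₀‖)^2 ≤ (supNorm K p)^2 :=
          pow_le_pow_left₀ (by positivity) hkey 2
        rw [div_le_iff₀ (by positivity), inv_mul_eq_div, le_div_iff₀ (by positivity)]
        nlinarith [hkey2]
  rw [hS1, hS2, inv_inv]
  refine ⟨rfl, fun ν hν hνK hopt => ?_⟩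
  have h1 : christoffel ν n z₀ = m^2 :=
    le_antisymm (hupper ν hν hνK) (hχν₀ ▸ hopt (discMeas a x) hν₀prob hν₀K)
  rw [h1]
end
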